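/- arXiv:2507.02285 — 6 statements merged into one kernel-verified Lean document; each statement's English description precedes it below -/
import Mathlib

section
/- Let H be a real Hilbert space and T : H → Set H a maximally monotone operator. Then for every x, v ∈ H and every λ > 0, the Fitzpatrick function satisfies F_T(x,v) − ⟨x,v⟩ ≥ (1/λ) ‖x − (I + λT)⁻¹(x + λv)‖², where (I + λT)⁻¹ denotes the (single-valued, everywhere defined) resolvent of λT. -/
open RealInnerProductSpace

variable {H : Type*} [NormedAddCommGroup H] [InnerProductSpace ℝ H] [CompleteSpace H]

/-- Graph of a set-valued operator. -/
def graphH (T : H → Set H) : Set (H × H) := {p | p.2 ∈ T p.1}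

/-- Monotone operator. -/
def MonotoneOpH (T : H → Set H) : Prop :=
  ∀ ⦃p q : H × H⦄, p ∈ graphH T → q ∈ graphH T → 0 ≤ ⟪p.1 - q.1, p.2 - q.2⟫

/-- Maximally monotone operator. -/
def MaxMonotoneOpH (T : H → Set H) : Prop :=
  MonotoneOpH T ∧ ∀ p : H × H, (∀ q ∈ graphH T, 0 ≤ ⟪p.1 - q.1, p.2 - q.2⟫) → p ∈ graphH T

/-- The Fitzpatrick function, with values in `EReal`. -/
noncomputable def FitzH (T : H → Set H) (x v : H) : EReal :=
  ⨆ p ∈ graphH T, ((⟪x, p.2⟫ + ⟪p.1, v⟫ - ⟪p.1, p.2⟫ : ℝ) : EReal)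

/-- Carlier's inequality in a Hilbert space. -/
theorem carlier_inequality (T : H → Set H) (hT : MaxMonotoneOpH T)
    (x v : H) (lam : ℝ) (hlam : 0 < lam) (w : H)
    (hw : ∃ t ∈ T w, x + lam • v = w + lam • t) :
    ((⟪x, v⟫ + (1 / lam) * ‖x - w‖ ^ 2 : ℝ) : EReal) ≤ FitzH T x v := by
  obtain ⟨t, ht, heq⟩ := hw
  have hl : lam ≠ 0 := ne_of_gt hlam
  have ht' : t = lam⁻¹ • (x - w) + v := by
    have h1 : lam • t = (x - w) + lam • v := by
      have : x + lam • v - w = w + lam • t - w := by rw [heq]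
      simpa [add_sub_cancel_left, sub_add_eq_add_sub] using this.symm
    have := congrArg (fun y => lam⁻¹ • y) h1
    simpa [smul_smul, inv_mul_cancel₀ hl, smul_add] using this
  have key : (⟪x, v⟫ + (1 / lam) * ‖x - w‖ ^ 2 : ℝ) = ⟪x, t⟫ + ⟪w, v⟫ - ⟪w, t⟫ := by
    subst ht'
    have h2 : ⟪x - w, x - w⟫ = ‖x - w‖ ^ 2 := real_inner_self_eq_norm_sq _
    have hx : ⟪x, x - w⟫ - ⟪w, x - w⟫ = ‖x - w‖ ^ 2 := by
      rw [← h2, ← inner_sub_left]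
    simp only [inner_add_right, real_inner_smul_right]
    field_simp
    nlinarith [hx]
  rw [key]
  exact le_iSup₂_of_le (⟨w, t⟩ : H × H) ht le_rfl
end

section
/- Let X be a reflexive real Banach space, T, B : X ⇉ X* maximally monotone operators. Assume B is strongly monotone with constant c > 0 and B has a finite-valued Fitzpatrick function. Then for every (x,v) ∈ X × X* and λ > 0, F_T(x,v) − ⟨x,v⟩ ≥ (c/λ) · sup_{x' ∈ Bx} ‖x − (B + λT)⁻¹(x' + λv)‖², where (B + λT)⁻¹ is single-valued with full domain. -/
open NormedSpace

variable {X : Type*} [NormedAddCommGroup X] [NormedSpace ℝ X]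

/-- Graph of a set-valued operator into the dual. -/
def graphB (T : X → Set (StrongDual ℝ X)) : Set (X × StrongDual ℝ X) := {p | p.2 ∈ T p.1}

/-- Monotone operator from `X` to its dual. -/
def MonotoneOpB (T : X → Set (StrongDual ℝ X)) : Prop :=
  ∀ ⦃p q : X × StrongDual ℝ X⦄, p ∈ graphB T → q ∈ graphB T → 0 ≤ (p.2 - q.2) (p.1 - q.1)

/-- Maximally monotone operator from `X` to its dual. -/
def MaxMonotoneOpB (T : X → Set (StrongDual ℝ X)) : Prop :=
  MonotoneOpB T ∧
    ∀ p : X × StrongDual ℝ X, (∀ q ∈ graphB T, 0 ≤ (p.2 - q.2) (p.1 - q.1)) → p ∈ graphB T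

/-- The Fitzpatrick function, with values in `EReal`. -/
noncomputable def FitzB (T : X → Set (StrongDual ℝ X)) (x : X) (v : StrongDual ℝ X) : EReal :=
  ⨆ p ∈ graphB T, ((p.2 x + v p.1 - p.2 p.1 : ℝ) : EReal)

/-- Strong monotonicity with constant `c`. -/
def StronglyMonotoneB (B : X → Set (StrongDual ℝ X)) (c : ℝ) : Prop :=
  ∀ ⦃x y : X⦄ ⦃v u : StrongDual ℝ X⦄, v ∈ B x → u ∈ B y → c * ‖x - y‖ ^ 2 ≤ (v - u) (x - y)

/-- The normalized duality mapping. -/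
def JdualMap (x : X) : Set (StrongDual ℝ X) := {v | v x = ‖x‖ * ‖v‖ ∧ ‖v‖ = ‖x‖}

/-- The Fenchel subdifferential of a real-valued function. -/
def SubdiffB (f : X → ℝ) (x : X) : Set (StrongDual ℝ X) := {v | ∀ y, f x + v (y - x) ≤ f y}

/-- `2`-uniform convexity with constant `μ`, via the modulus of convexity. -/
def TwoUniformlyConvex (X : Type*) [NormedAddCommGroup X] [NormedSpace ℝ X] (μ : ℝ) : Prop :=
  ∀ ε ∈ Set.Icc (0 : ℝ) 2, ∀ x y : X, ‖x‖ = 1 → ‖y‖ = 1 → ε ≤ ‖x - y‖ →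
    μ * ε ^ 2 ≤ 1 - ‖(2 : ℝ)⁻¹ • (x + y)‖


set_option synthInstance.maxHeartbeats 1000000
set_option maxHeartbeats 2000000

private lemma seg_limit {A b α : ℝ} (h : ∀ θ : ℝ, 0 < θ → θ ≤ 1 → θ * A + (1-θ) * b < α) :
    b ≤ α := by
  by_contra hc
  push_neg at hc
  have hba : 0 < b - α := by linarith
  have hd0 : (0:ℝ) ≤ |A - b| := abs_nonneg _
  set θ := min 1 ((b - α)/(|A - b| + 1)) with hθ
  have hθpos : 0 < θ := lt_min one_pos (div_pos hba (by positivity))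
  have h2 := h θ hθpos (min_le_left _ _)
  have hθle : θ ≤ (b - α)/(|A - b| + 1) := min_le_right _ _
  have key : θ * (b - A) ≤ b - α := by
    have hb1 : b - A ≤ |A - b| := by rw [abs_sub_comm]; exact le_abs_self _
    calc θ * (b - A) ≤ θ * |A - b| := mul_le_mul_of_nonneg_left hb1 hθpos.le
      _ ≤ (b - α)/(|A - b| + 1) * |A - b| := mul_le_mul_of_nonneg_right hθle hd0
      _ ≤ b - α := by
          rw [div_mul_eq_mul_div, div_le_iff₀ (by positivity : (0:ℝ) < |A - b| + 1)]
          nlinarith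
  have e : θ * A + (1-θ) * b = b - θ * (b - A) := by ring
  rw [e] at h2
  linarith

private lemma graphB_nonempty {S : X → Set (StrongDual ℝ X)} (hS : MaxMonotoneOpB S) :
    (graphB S).Nonempty := by
  rcases Set.eq_empty_or_nonempty (graphB S) with h | h
  · exact ⟨(0, 0), hS.2 (0, 0) (fun q hq => by simp [h] at hq)⟩
  · exact h

private lemma lemA' {S : X → Set (StrongDual ℝ X)} (hS : MaxMonotoneOpB S) (x : X) (v : StrongDual ℝ X) :
    ∃ p ∈ graphB S, 0 ≤ (p.2 - v) (x - p.1) := by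
  by_contra h
  push_neg at h
  have hx : (x, v) ∈ graphB S := by
    refine hS.2 (x, v) (fun q hq => ?_)
    have h0 := h q hq
    have e : (v - q.2) (x - q.1) = -((q.2 - v) (x - q.1)) := by
      rw [← neg_sub q.2 v, ContinuousLinearMap.neg_apply]
    rw [e]; linarith
  have := h (x, v) hx
  simp at this

private lemma fitz_bdd {B : X → Set (StrongDual ℝ X)}
    (hfin : ∀ (x : X) (v : StrongDual ℝ X), FitzB B x v < ⊤) (w : X) (v : StrongDual ℝ X) :
    ∃ M : ℝ, ∀ p ∈ graphB B, p.2 w + v p.1 - p.2 p.1 ≤ M := by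
  refine ⟨(FitzB B w v).toReal, fun p hp => ?_⟩
  have h1 : ((p.2 w + v p.1 - p.2 p.1 : ℝ) : EReal) ≤ FitzB B w v :=
    le_iSup₂ (f := fun p (_ : p ∈ graphB B) => ((p.2 w + v p.1 - p.2 p.1 : ℝ) : EReal)) p hp
  have h2 : FitzB B w v ≤ ((FitzB B w v).toReal : EReal) :=
    EReal.le_coe_toReal (hfin w v).ne
  exact_mod_cast h1.trans h2

private lemma exists_solution [CompleteSpace X]
    (hrefl : Function.Surjective (inclusionInDoubleDual ℝ X))
    (T B : X → Set (StrongDual ℝ X)) (hT : MaxMonotoneOpB T) (hB : MaxMonotoneOpB B)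
    (hfin : ∀ (x : X) (v : StrongDual ℝ X), FitzB B x v < ⊤)
    (lam : ℝ) (hlam : 0 < lam) (u : StrongDual ℝ X) :
    ∃ w : X, ∃ b ∈ B w, ∃ t ∈ T w, u = b + lam • t := by
  have hlemA : ∀ (S : X → Set (StrongDual ℝ X)), MaxMonotoneOpB S → ∀ (x : X) (v : StrongDual ℝ X),
      ∃ p ∈ graphB S, 0 ≤ (p.2 - v) (x - p.1) := fun S hS => lemA' hS
  have hfb := fitz_bdd hfin
  have hgne := graphB_nonempty hB
  have hgneT := graphB_nonempty hT
  classical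
  obtain ⟨p₀B, hp₀B⟩ := hgne
  set φ : (X × StrongDual ℝ X) → (X × StrongDual ℝ X) → ℝ :=
    fun p q => (p.2 - u) (q.1 - p.1) - lam * q.2 p.1 with hφ
  set f : (X × StrongDual ℝ X) → ℝ := fun q => sSup ((fun p => φ p q) '' graphB B) with hf
  have hne : ∀ q, ((fun p => φ p q) '' graphB B).Nonempty :=
    fun q => ⟨_, ⟨p₀B, hp₀B, rfl⟩⟩
  have hbdd : ∀ q, BddAbove ((fun p => φ p q) '' graphB B) := by
    intro q
    obtain ⟨M, hM⟩ := hfb q.1 (u - lam • q.2)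
    refine ⟨M - u q.1, ?_⟩
    rintro r ⟨p, hp, rfl⟩
    have h1 := hM p hp
    have e : φ p q = (p.2 q.1 + (u - lam • q.2) p.1 - p.2 p.1) - u q.1 := by
      simp only [hφ, ContinuousLinearMap.sub_apply, ContinuousLinearMap.smul_apply,
        map_sub, smul_eq_mul]
      ring
    show φ p q ≤ M - u q.1
    rw [e]
    linarith
  have hle : ∀ p ∈ graphB B, ∀ q, φ p q ≤ f q :=
    fun p hp q => le_csSup (hbdd q) ⟨p, hp, rfl⟩
  have hsup_le : ∀ (q) (M : ℝ), (∀ p ∈ graphB B, φ p q ≤ M) → f q ≤ M := by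
    intro q M h
    refine csSup_le (hne q) ?_
    rintro r ⟨p, hp, rfl⟩
    exact h p hp
  have hconv : ∀ (a b : X × StrongDual ℝ X) (θ μ : ℝ), 0 ≤ θ → 0 ≤ μ → θ + μ = 1 →
      f (θ • a + μ • b) ≤ θ * f a + μ * f b := by
    intro a b θ μ hθ hμ hθμ
    have hμ' : μ = 1 - θ := by linarith
    subst hμ'
    refine hsup_le _ _ (fun p hp => ?_)
    have e : φ p (θ • a + (1-θ) • b) = θ * φ p a + (1-θ) * φ p b := by
      simp only [hφ]
      simp only [Prod.fst_add, Prod.snd_add, Prod.smul_fst, Prod.smul_snd,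
        ContinuousLinearMap.sub_apply, ContinuousLinearMap.add_apply,
        ContinuousLinearMap.smul_apply, map_add, map_smul, map_sub, smul_eq_mul]
      ring
    rw [e]
    have h1 := hle p hp a
    have h2 := hle p hp b
    nlinarith
  -- Baire
  have hclosed : ∀ n : ℕ, IsClosed {q : X × StrongDual ℝ X | f q ≤ (n : ℝ)} := by
    intro n
    have he : {q : X × StrongDual ℝ X | f q ≤ (n : ℝ)} =
        ⋂ (p : graphB B), {q | φ p.1 q ≤ (n : ℝ)} := by
      ext q
      simp only [Set.mem_iInter, Set.mem_setOf_eq]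
      exact ⟨fun h p => (hle p.1 p.2 q).trans h, fun h => hsup_le q _ (fun p hp => h ⟨p, hp⟩)⟩
    rw [he]
    refine isClosed_iInter (fun p => ?_)
    have hcont : Continuous fun q : X × StrongDual ℝ X => φ p.1 q := by
      have h1 : Continuous fun q : X × StrongDual ℝ X => (p.1.2 - u) (q.1 - p.1.1) :=
        (p.1.2 - u).continuous.comp (continuous_fst.sub continuous_const)
      have h2 : Continuous fun q : X × StrongDual ℝ X => q.2 p.1.1 :=
        (ContinuousLinearMap.apply ℝ ℝ p.1.1).continuous.comp continuous_snd
      exact h1.sub (continuous_const.mul h2)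
    exact isClosed_le hcont continuous_const
  have hunion : (⋃ n : ℕ, {q : X × StrongDual ℝ X | f q ≤ (n : ℝ)}) = Set.univ := by
    ext q
    simp only [Set.mem_iUnion, Set.mem_setOf_eq, Set.mem_univ, iff_true]
    exact ⟨⌈f q⌉₊, Nat.le_ceil _⟩
  obtain ⟨n0, q₀, hq₀⟩ := nonempty_interior_of_iUnion_of_closed hclosed hunion
  rw [mem_interior_iff_mem_nhds, Metric.mem_nhds_iff] at hq₀
  obtain ⟨ρ, hρ, hball⟩ := hq₀
  -- local boundedness everywhere
  have hlocbdd : ∀ q : X × StrongDual ℝ X, ∃ M : ℝ, ∀ y ∈ Metric.ball q (ρ/2), f y ≤ M := by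
    intro q
    refine ⟨((n0 : ℝ) + f ((2:ℝ) • q - q₀))/2, fun y hy => ?_⟩
    set A := (2:ℝ) • y - ((2:ℝ) • q - q₀) with hA
    have hmem : A ∈ Metric.ball q₀ ρ := by
      rw [Metric.mem_ball, dist_eq_norm] at hy ⊢
      have e : A - q₀ = (2:ℝ) • (y - q) := by rw [hA]; module
      rw [e, norm_smul]
      simp only [Real.norm_ofNat]
      linarith
    have hfA : f A ≤ (n0 : ℝ) := hball hmem
    have hcomb : ((2:ℝ)⁻¹) • A + ((2:ℝ)⁻¹) • ((2:ℝ) • q - q₀) = y := by rw [hA]; module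
    have := hconv A ((2:ℝ) • q - q₀) (2:ℝ)⁻¹ (2:ℝ)⁻¹ (by norm_num) (by norm_num) (by norm_num)
    rw [hcomb] at this
    linarith
  -- epigraph
  set epi : Set ((X × StrongDual ℝ X) × ℝ) := {a | f a.1 ≤ a.2} with hepi
  have hepiconv : Convex ℝ epi := by
    rintro ⟨a, ra⟩ ha ⟨b, rb⟩ hb θ μ hθ hμ hθμ
    simp only [hepi, Set.mem_setOf_eq] at ha hb ⊢
    have h1 := hconv a b θ μ hθ hμ hθμ
    simp only [Prod.smul_fst, Prod.smul_snd, Prod.fst_add, Prod.snd_add, smul_eq_mul]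
    calc f (θ • a + μ • b) ≤ θ * f a + μ * f b := h1
      _ ≤ θ * ra + μ * rb := by
          have := mul_le_mul_of_nonneg_left ha hθ
          have := mul_le_mul_of_nonneg_left hb hμ
          linarith
  have hint : ∀ (q : X × StrongDual ℝ X) (M : ℝ), (∀ y ∈ Metric.ball q (ρ/2), f y ≤ M) →
      ∀ r : ℝ, M < r → (q, r) ∈ interior epi := by
    intro q M hM r hr
    rw [mem_interior]
    refine ⟨Metric.ball q (ρ/2) ×ˢ Set.Ioi M, ?_, (Metric.isOpen_ball).prod isOpen_Ioi,
      Set.mem_prod.mpr ⟨Metric.mem_ball_self (by linarith), hr⟩⟩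
    rintro ⟨y, s⟩ ⟨hy, hs⟩
    exact (hM y hy).trans (le_of_lt hs)
  have hintmem : ∀ q : X × StrongDual ℝ X, ∃ M : ℝ, ∀ r : ℝ, M < r → (q, r) ∈ interior epi := by
    intro q
    obtain ⟨M, hM⟩ := hlocbdd q
    exact ⟨M, fun r hr => hint q M hM r hr⟩
  clear hint hlocbdd hball hclosed hunion hbdd hne
  obtain ⟨p₀T, hp₀T⟩ := hgneT
  -- the set C2
  set C2 : Set ((X × StrongDual ℝ X) × ℝ) :=
    {a | ∀ p ∈ graphB T, a.2 ≤ -(lam * (p.2 a.1.1 + a.1.2 p.1 - p.2 p.1))} with hC2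
  have hC2conv : Convex ℝ C2 := by
    rintro ⟨a, ra⟩ ha ⟨b, rb⟩ hb θ μ hθ hμ hθμ
    intro p hp
    have h1 := ha p hp
    have h2 := hb p hp
    have hμ' : μ = 1 - θ := by linarith
    subst hμ'
    simp only [Prod.smul_fst, Prod.smul_snd, Prod.fst_add, Prod.snd_add, smul_eq_mul,
      map_add, map_smul, ContinuousLinearMap.add_apply, ContinuousLinearMap.smul_apply]
    nlinarith
  have hC2mem : ∀ p ∈ graphB T, ((p : X × StrongDual ℝ X), -(lam * p.2 p.1)) ∈ C2 := by
    intro p hp p' hp'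
    have hm := hT.1 hp hp'
    have e : (p.2 - p'.2) (p.1 - p'.1) = p.2 p.1 - p.2 p'.1 - p'.2 p.1 + p'.2 p'.1 := by
      simp only [ContinuousLinearMap.sub_apply, map_sub]; ring
    rw [e] at hm
    have := mul_le_mul_of_nonneg_left hm hlam.le
    simp only
    nlinarith
  -- disjointness
  have hdisj : Disjoint (interior epi) C2 := by
    rw [Set.disjoint_left]
    rintro ⟨q, r⟩ hin hc2
    obtain ⟨ε, hε, hball2⟩ := Metric.mem_nhds_iff.mp (isOpen_interior.mem_nhds hin)
    have hmem2 : ((q, r - ε/2) : (X × StrongDual ℝ X) × ℝ) ∈ epi := by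
      refine interior_subset (hball2 ?_)
      rw [Metric.mem_ball, Prod.dist_eq]
      simp only [dist_self, dist_eq_norm]
      have : ‖r - ε/2 - r‖ = ε/2 := by
        rw [show r - ε/2 - r = -(ε/2) by ring, norm_neg, Real.norm_eq_abs, abs_of_pos (by linarith)]
      rw [this]
      rw [max_lt_iff]
      constructor <;> linarith
    have hfq : f q ≤ r - ε/2 := hmem2
    obtain ⟨pB, hpB, hpB0⟩ := hlemA B hB q.1 (u - lam • q.2)
    have h1 : -(lam * q.2 q.1) ≤ f q := by
      have hle1 := hle pB hpB q
      have e : (pB.2 - (u - lam • q.2)) (q.1 - pB.1) = φ pB q + lam * q.2 q.1 := by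
        simp only [hφ]
        simp only [ContinuousLinearMap.sub_apply, ContinuousLinearMap.smul_apply,
          map_sub, smul_eq_mul]
        ring
      rw [e] at hpB0
      linarith
    obtain ⟨pT, hpT, hpT0⟩ := hlemA T hT q.1 q.2
    have h2 := hc2 pT hpT
    have e2 : (pT.2 - q.2) (q.1 - pT.1) = pT.2 q.1 - pT.2 pT.1 - q.2 q.1 + q.2 pT.1 := by
      simp only [ContinuousLinearMap.sub_apply, map_sub]; ring
    rw [e2] at hpT0
    simp only at h2
    nlinarith [mul_le_mul_of_nonneg_left hpT0 hlam.le]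
  -- separation
  obtain ⟨L, α, hLs, hLt⟩ :=
    geometric_hahn_banach_open (hepiconv.interior) isOpen_interior hC2conv hdisj
  set P : StrongDual ℝ X := L.comp ((ContinuousLinearMap.inl ℝ (X × StrongDual ℝ X) ℝ).comp
    (ContinuousLinearMap.inl ℝ X (StrongDual ℝ X))) with hP
  set Ψ : StrongDual ℝ (StrongDual ℝ X) := L.comp ((ContinuousLinearMap.inl ℝ (X × StrongDual ℝ X) ℝ).comp
    (ContinuousLinearMap.inr ℝ X (StrongDual ℝ X))) with hΨ
  set γ : ℝ := L (((0 : X), (0 : StrongDual ℝ X)), (1 : ℝ)) with hγ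
  have hdec : ∀ (w : X) (t : StrongDual ℝ X) (r : ℝ), L ((w, t), r) = P w + Ψ t + γ * r := by
    intro w t r
    have e : ((w, t), r) = ((((w, (0 : StrongDual ℝ X)), (0:ℝ)) + (((0:X), t), (0:ℝ)))
        + r • (((0:X), (0 : StrongDual ℝ X)), (1:ℝ))) := by
      simp [Prod.ext_iff]
    rw [e, map_add, map_add, map_smul]
    simp only [hP, hΨ, hγ, ContinuousLinearMap.comp_apply, ContinuousLinearMap.inl_apply,
      ContinuousLinearMap.inr_apply, smul_eq_mul]
    ring
  -- gamma is negative
  have hγneg : γ < 0 := by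
    obtain ⟨M, hM⟩ := hintmem p₀T
    have hC2b := hLt _ (hC2mem p₀T hp₀T)
    rw [show ((p₀T : X × StrongDual ℝ X), -(lam * p₀T.2 p₀T.1)) = ((p₀T.1, p₀T.2), -(lam * p₀T.2 p₀T.1)) by rw [Prod.mk.eta]] at hC2b
    rw [hdec] at hC2b
    have hS1 := hLs _ (hM (M+1) (by linarith))
    rw [show ((p₀T : X × StrongDual ℝ X), M + 1) = ((p₀T.1, p₀T.2), M+1) by rw [Prod.mk.eta]] at hS1
    rw [hdec] at hS1
    rcases lt_trichotomy γ 0 with h | h | h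
    · exact h
    · exfalso; rw [h] at hC2b hS1; linarith
    · exfalso
      set r : ℝ := max (M + 1) ((α - (P p₀T.1 + Ψ p₀T.2)) / γ + 1) with hr
      have hr1 : M < r := lt_of_lt_of_le (by linarith) (le_max_left _ _)
      have hS2 := hLs _ (hM r hr1)
      rw [show ((p₀T : X × StrongDual ℝ X), r) = ((p₀T.1, p₀T.2), r) by rw [Prod.mk.eta]] at hS2
      rw [hdec] at hS2
      have hr2 : (α - (P p₀T.1 + Ψ p₀T.2)) / γ + 1 ≤ r := le_max_right _ _
      have : α - (P p₀T.1 + Ψ p₀T.2) + γ ≤ γ * r := by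
        have := mul_le_mul_of_nonneg_left hr2 h.le
        rw [mul_add, mul_one, mul_div_cancel₀ _ h.ne'] at this
        linarith
      linarith
  -- the master inequality
  have hI : ∀ q : X × StrongDual ℝ X, P q.1 + Ψ q.2 + γ * f q ≤ α := by
    intro q
    obtain ⟨M0, hM0⟩ := hintmem p₀T
    have ha₀ : ((p₀T, M0+1) : (X × StrongDual ℝ X) × ℝ) ∈ interior epi := hM0 _ (lt_add_one M0)
    have hbepi : ((q, f q) : (X × StrongDual ℝ X) × ℝ) ∈ epi := by
      simp only [hepi, Set.mem_setOf_eq]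
      exact le_rfl
    have hseg : ∀ θ : ℝ, 0 < θ → θ ≤ 1 →
        θ * L (p₀T, M0+1) + (1-θ) * L (q, f q) < α := by
      intro θ h0 h1
      have hmem := hepiconv.combo_interior_closure_mem_interior (a := θ) (b := 1 - θ)
        ha₀ (subset_closure hbepi) h0 (by linarith) (by ring)
      have h3 := hLs _ hmem
      rw [map_add, map_smul, map_smul] at h3
      simpa [smul_eq_mul] using h3
    have hfin2 := seg_limit hseg
    calc P q.1 + Ψ q.2 + γ * f q = L ((q.1, q.2), f q) := (hdec _ _ _).symm
      _ = L (q, f q) := by rw [Prod.mk.eta]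
      _ ≤ α := hfin2
  -- reflexivity: represent Ψ
  obtain ⟨qh, hqh⟩ := hrefl Ψ
  have hΨap : ∀ t : StrongDual ℝ X, Ψ t = t qh := fun t => by rw [← hqh]; rfl
  have hlγ : lam * γ < 0 := mul_neg_of_pos_of_neg hlam hγneg
  have hlam0 : lam ≠ 0 := hlam.ne'
  have hγ0 : γ ≠ 0 := hγneg.ne
  set xbar : X := (lam * γ)⁻¹ • qh with hxbar
  have hqx : qh = (lam * γ) • xbar := by
    rw [hxbar, smul_smul, mul_inv_cancel₀ hlγ.ne, one_smul]
  set bbar : StrongDual ℝ X := u - γ⁻¹ • P with hbbar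
  set tbar : StrongDual ℝ X := (lam * γ)⁻¹ • P with htbar
  -- star 1
  have star1 : ∀ p ∈ graphB B, P p.1 - γ * ((p.2 - u) (xbar - p.1)) ≤ α := by
    intro p hp
    have hfq : f (p.1, lam⁻¹ • (u - p.2)) ≤ (p.2 - u) p.1 := by
      refine hsup_le _ _ (fun p' hp' => ?_)
      have hm := hB.1 hp' hp
      have e : (p.2 - u) p.1 - φ p' (p.1, lam⁻¹ • (u - p.2)) = (p'.2 - p.2) (p'.1 - p.1) := by
        simp only [hφ]
        simp only [ContinuousLinearMap.sub_apply, ContinuousLinearMap.smul_apply,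
          map_sub, smul_eq_mul]
        field_simp
        ring
      linarith
    have hIq := hI (p.1, lam⁻¹ • (u - p.2))
    dsimp only at hIq
    have hΨq : Ψ (lam⁻¹ • (u - p.2)) = γ * ((u - p.2) xbar) := by
      rw [hΨap]
      simp only [ContinuousLinearMap.smul_apply, smul_eq_mul]
      rw [hqx]
      simp only [map_smul, smul_eq_mul]
      field_simp
    have hmul : γ * ((p.2 - u) p.1) ≤ γ * f (p.1, lam⁻¹ • (u - p.2)) :=
      mul_le_mul_of_nonpos_left hfq hγneg.le
    have e2 : (p.2 - u) (xbar - p.1) = (p.2 - u) xbar - (p.2 - u) p.1 := map_sub _ _ _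
    have e3 : (u - p.2) xbar = -((p.2 - u) xbar) := by
      rw [← neg_sub p.2 u, ContinuousLinearMap.neg_apply]
    rw [hΨq, e3] at hIq
    have key : P p.1 - γ * ((p.2 - u) (xbar - p.1))
        = P p.1 + γ * -((p.2 - u) xbar) + γ * ((p.2 - u) p.1) := by
      rw [e2]; ring
    rw [key]
    linarith
  -- star 2
  have star2 : ∀ p ∈ graphB T, α ≤ P p.1 + (lam * γ) * (p.2 (xbar - p.1)) := by
    intro p hp
    have h := hLt _ (hC2mem p hp)
    rw [show ((p : X × StrongDual ℝ X), -(lam * p.2 p.1)) = ((p.1, p.2), -(lam * p.2 p.1))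
      from by rw [Prod.mk.eta]] at h
    rw [hdec] at h
    have hΨp : Ψ p.2 = (lam * γ) * (p.2 xbar) := by
      rw [hΨap, hqx, map_smul, smul_eq_mul]
    rw [hΨp] at h
    have e : p.2 (xbar - p.1) = p.2 xbar - p.2 p.1 := map_sub _ _ _
    have e2 : γ * -(lam * p.2 p.1) = -((lam * γ) * p.2 p.1) := by ring
    rw [e2] at h
    rw [show lam * γ * (p.2 (xbar - p.1)) = lam * γ * p.2 xbar + -(lam * γ * p.2 p.1)
      from by rw [e]; ring]
    linarith
  -- alpha = P xbar
  have hαx : α ≤ P xbar := by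
    obtain ⟨p, hp, h0⟩ := hlemA T hT xbar tbar
    have e1 : (p.2 - tbar) (xbar - p.1)
        = p.2 (xbar - p.1) - (lam * γ)⁻¹ * (P (xbar - p.1)) := by
      simp only [htbar, ContinuousLinearMap.sub_apply, ContinuousLinearMap.smul_apply,
        smul_eq_mul]
    rw [e1] at h0
    have h4 : (lam * γ)⁻¹ * (P (xbar - p.1)) ≤ p.2 (xbar - p.1) := by linarith
    have h5 := mul_le_mul_of_nonpos_left h4 hlγ.le
    have hc : (lam * γ) * ((lam * γ)⁻¹ * (P (xbar - p.1))) = P (xbar - p.1) := by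
      field_simp
    rw [hc] at h5
    have est2 := star2 p hp
    have emap : P (xbar - p.1) = P xbar - P p.1 := map_sub _ _ _
    linarith
  have hxα : P xbar ≤ α := by
    obtain ⟨p, hp, h0⟩ := hlemA B hB xbar bbar
    have e1 : (p.2 - bbar) (xbar - p.1)
        = (p.2 - u) (xbar - p.1) + γ⁻¹ * (P (xbar - p.1)) := by
      simp only [hbbar, ContinuousLinearMap.sub_apply, ContinuousLinearMap.smul_apply,
        smul_eq_mul, map_sub]
      ring
    rw [e1] at h0
    have h5 := mul_le_mul_of_nonpos_left h0 hγneg.le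
    have hc : γ * ((p.2 - u) (xbar - p.1) + γ⁻¹ * (P (xbar - p.1)))
        = γ * ((p.2 - u) (xbar - p.1)) + P (xbar - p.1) := by
      field_simp
    rw [mul_zero, hc] at h5
    have est1 := star1 p hp
    have emap : P (xbar - p.1) = P xbar - P p.1 := map_sub _ _ _
    linarith
  -- memberships
  have hbmem : (xbar, bbar) ∈ graphB B := by
    refine hB.2 _ (fun p hp => ?_)
    have est1 := star1 p hp
    have e1 : ((xbar, bbar).2 - p.2) ((xbar, bbar).1 - p.1)
        = -((p.2 - u) (xbar - p.1)) - γ⁻¹ * (P (xbar - p.1)) := by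
      simp only [hbbar, ContinuousLinearMap.sub_apply, ContinuousLinearMap.smul_apply,
        smul_eq_mul, map_sub]
      ring
    rw [e1]
    have emap : P (xbar - p.1) = P xbar - P p.1 := map_sub _ _ _
    have h4 : -(P xbar - P p.1) ≤ γ * ((p.2 - u) (xbar - p.1)) := by linarith
    have h5 := mul_le_mul_of_nonpos_left h4 (inv_nonpos.mpr hγneg.le)
    have hc : γ⁻¹ * (γ * ((p.2 - u) (xbar - p.1))) = (p.2 - u) (xbar - p.1) := by
      field_simp
    rw [hc] at h5
    have hb2 : γ⁻¹ * -(P xbar - P p.1) = -(γ⁻¹ * (P xbar - P p.1)) := by ring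
    rw [hb2] at h5
    rw [emap]
    linarith
  have htmem : (xbar, tbar) ∈ graphB T := by
    refine hT.2 _ (fun p hp => ?_)
    have est2 := star2 p hp
    have e1 : ((xbar, tbar).2 - p.2) ((xbar, tbar).1 - p.1)
        = (lam * γ)⁻¹ * (P (xbar - p.1)) - p.2 (xbar - p.1) := by
      simp only [htbar, ContinuousLinearMap.sub_apply, ContinuousLinearMap.smul_apply,
        smul_eq_mul]
    rw [e1]
    have emap : P (xbar - p.1) = P xbar - P p.1 := map_sub _ _ _
    have h4 : P (xbar - p.1) ≤ (lam * γ) * (p.2 (xbar - p.1)) := by linarith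
    have h5 := mul_le_mul_of_nonpos_left h4 (inv_nonpos.mpr hlγ.le)
    have hc : (lam * γ)⁻¹ * ((lam * γ) * (p.2 (xbar - p.1))) = p.2 (xbar - p.1) := by
      field_simp
    rw [hc] at h5
    linarith
  refine ⟨xbar, bbar, hbmem, tbar, htmem, ?_⟩
  have hfinal : bbar + lam • tbar = u := by
    rw [hbbar, htbar]
    ext y
    simp only [ContinuousLinearMap.add_apply, ContinuousLinearMap.sub_apply,
      ContinuousLinearMap.smul_apply, smul_eq_mul]
    field_simp
    ring
  exact hfinal.symm

/-- Carlier's inequality in a reflexive Banach space. -/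
theorem carlier_inequality_banach [CompleteSpace X]
    (hrefl : Function.Surjective (inclusionInDoubleDual ℝ X))
    (T B : X → Set (StrongDual ℝ X)) (hT : MaxMonotoneOpB T) (hB : MaxMonotoneOpB B)
    (c : ℝ) (hc : 0 < c) (hBs : StronglyMonotoneB B c)
    (hfin : ∀ (x : X) (v : StrongDual ℝ X), FitzB B x v < ⊤)
    (x : X) (v : StrongDual ℝ X) (lam : ℝ) (hlam : 0 < lam) :
    (∀ u : StrongDual ℝ X, ∃! w : X, ∃ b ∈ B w, ∃ t ∈ T w, u = b + lam • t) ∧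
      ∀ x' ∈ B x, ∀ w : X, (∃ b ∈ B w, ∃ t ∈ T w, x' + lam • v = b + lam • t) →
        ((v x + (c / lam) * ‖x - w‖ ^ 2 : ℝ) : EReal) ≤ FitzB T x v := by
  constructor
  · intro u
    obtain ⟨w, b, hb, t, ht, heq⟩ := exists_solution hrefl T B hT hB hfin lam hlam u
    refine ⟨w, ⟨b, hb, t, ht, heq⟩, ?_⟩
    rintro y ⟨b', hb', t', ht', heq'⟩
    have h1 := hBs hb' hb
    have h2 : (0:ℝ) ≤ (t' - t) (y - w) :=
      hT.1 (p := (y, t')) (q := (w, t)) ht' ht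
    have heq2 : b' + lam • t' = b + lam • t := by rw [← heq, ← heq']
    have e : b' - b = lam • t - lam • t' :=
      sub_eq_sub_iff_add_eq_add.mpr (by rw [heq2, add_comm])
    have e2 : (b' - b) (y - w) = -(lam * ((t' - t) (y - w))) := by
      rw [e]
      simp only [ContinuousLinearMap.sub_apply, ContinuousLinearMap.smul_apply,
        smul_eq_mul, map_sub]
      ring
    rw [e2] at h1
    have h3 : 0 ≤ lam * ((t' - t) (y - w)) := mul_nonneg hlam.le h2
    have h0 : ‖y - w‖ ^ 2 ≤ 0 := by nlinarith
    have h00 : ‖y - w‖ ^ 2 = 0 := le_antisymm h0 (by positivity)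
    have h01 : ‖y - w‖ = 0 := by
      have := sq_eq_zero_iff.mp h00
      exact this
    have : y - w = 0 := norm_eq_zero.mp h01
    have : y = w := by
      have := sub_eq_zero.mp this
      exact this
    exact this
  · rintro x' hx' w ⟨b, hb, t, ht, heq⟩
    have h1 := hBs hx' hb
    have e : x' - b = lam • t - lam • v :=
      sub_eq_sub_iff_add_eq_add.mpr (by rw [heq, add_comm])
    have e3 : (x' - b) (x - w) = lam * ((t - v) (x - w)) := by
      rw [e]
      simp only [ContinuousLinearMap.sub_apply, ContinuousLinearMap.smul_apply,
        smul_eq_mul, map_sub]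
      ring
    have expand : (t - v) (x - w) = t x - t w - v x + v w := by
      simp only [ContinuousLinearMap.sub_apply, map_sub]; ring
    have hreal : v x + (c / lam) * ‖x - w‖ ^ 2 ≤ t x + v w - t w := by
      have hdiv : (c / lam) * ‖x - w‖ ^ 2 ≤ (t - v) (x - w) := by
        rw [div_mul_eq_mul_div, div_le_iff₀ hlam]
        rw [e3] at h1
        nlinarith
      linarith [hdiv, expand.le, expand.ge]
    have hmem : ((t x + v w - t w : ℝ) : EReal) ≤ FitzB T x v :=
      le_iSup₂ (f := fun p (_ : p ∈ graphB T) => ((p.2 x + v p.1 - p.2 p.1 : ℝ) : EReal))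
        (w, t) ht
    calc ((v x + (c / lam) * ‖x - w‖ ^ 2 : ℝ) : EReal)
        ≤ ((t x + v w - t w : ℝ) : EReal) := by exact_mod_cast hreal
      _ ≤ FitzB T x v := hmem
end

section
/- Let H be a real Hilbert space and T : H ⇉ H maximally monotone. Then for every (x,v) ∈ H × H: F_T(x,v) − ⟨x,v⟩ ≥ (1/2) inf_{(w,z) ∈ G(T)} (‖x − w‖² + ‖v − z‖²). -/
open RealInnerProductSpace Filter

variable {H : Type*} [NormedAddCommGroup H] [InnerProductSpace ℝ H] [CompleteSpace H]

namespace ImprovedFitz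

/-- The integrand of `h(p) = F(p) + ‖p‖²/2`. -/
noncomputable def tt (p q : H × H) : ℝ :=
  ⟪p.1, q.2⟫ + ⟪q.1, p.2⟫ - ⟪q.1, q.2⟫ + (1/2) * ‖p.1‖^2 + (1/2) * ‖p.2‖^2

/-- `c` is an upper bound for `h(p)`. -/
def Bnd (T : H → Set H) (p : H × H) (c : ℝ) : Prop := ∀ q ∈ graphH T, tt p q ≤ c

/-- Squared distance in the product. -/
noncomputable def DD (p q : H × H) : ℝ := ‖p.1 - q.1‖^2 + ‖p.2 - q.2‖^2

lemma DD_nonneg (p q : H × H) : 0 ≤ DD p q := by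
  have := sq_nonneg ‖p.1 - q.1‖; have := sq_nonneg ‖p.2 - q.2‖
  unfold DD; linarith

lemma tt_eq' (p q : H × H) :
    tt p q = (1/2) * ‖p.1 + p.2‖^2 - ⟪p.1 - q.1, p.2 - q.2⟫ := by
  have h1 := norm_add_sq_real p.1 p.2
  have h2 : ⟪p.1 - q.1, p.2 - q.2⟫
      = ⟪p.1, p.2⟫ - ⟪p.1, q.2⟫ - ⟪q.1, p.2⟫ + ⟪q.1, q.2⟫ := by
    simp [inner_sub_left, inner_sub_right]; ring
  unfold tt; linarith

lemma graph_nonempty {T : H → Set H} (hT : MaxMonotoneOpH T) : (graphH T).Nonempty := by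
  by_contra h
  rw [Set.not_nonempty_iff_eq_empty] at h
  have := hT.2 (0, 0) (by intro q hq; rw [h] at hq; exact absurd hq (Set.notMem_empty q))
  rw [h] at this; exact this

lemma bnd_graph {T : H → Set H} (hT : MonotoneOpH T) {q : H × H} (hq : q ∈ graphH T) :
    Bnd T q ((1/2) * ‖q.1 + q.2‖^2) := by
  intro r hr
  rw [tt_eq']
  have := hT hq hr
  linarith

lemma bnd_lower {T : H → Set H} (hT : MaxMonotoneOpH T) {p : H × H} {c : ℝ}
    (h : Bnd T p c) : (1/2) * ‖p.1 + p.2‖^2 ≤ c := by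
  by_cases hp : p ∈ graphH T
  · have := h p hp
    rw [tt_eq'] at this
    simpa using this
  · have h2 : ¬ ∀ q ∈ graphH T, 0 ≤ ⟪p.1 - q.1, p.2 - q.2⟫ := fun hh => hp (hT.2 p hh)
    push_neg at h2
    obtain ⟨q, hq, hlt⟩ := h2
    have := h q hq
    rw [tt_eq'] at this
    linarith

lemma tt_mid (p p' q : H × H) :
    tt ((1/2 : ℝ) • (p + p')) q = tt p q / 2 + tt p' q / 2 - DD p p' / 8 := by
  have e1 : ((1/2 : ℝ) • (p + p')).1 = (1/2 : ℝ) • (p.1 + p'.1) := rfl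
  have e2 : ((1/2 : ℝ) • (p + p')).2 = (1/2 : ℝ) • (p.2 + p'.2) := rfl
  have n1 : ‖(1/2 : ℝ) • (p.1 + p'.1)‖^2 = (1/4) * ‖p.1 + p'.1‖^2 := by
    rw [norm_smul]; simp [Real.norm_eq_abs]; ring
  have n2 : ‖(1/2 : ℝ) • (p.2 + p'.2)‖^2 = (1/4) * ‖p.2 + p'.2‖^2 := by
    rw [norm_smul]; simp [Real.norm_eq_abs]; ring
  have a1 := norm_add_sq_real p.1 p'.1
  have a2 := norm_add_sq_real p.2 p'.2
  have s1 := norm_sub_sq_real p.1 p'.1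
  have s2 := norm_sub_sq_real p.2 p'.2
  unfold tt DD
  rw [e1, e2, n1, n2, real_inner_smul_left, real_inner_smul_right,
    inner_add_left, inner_add_right]
  linarith

lemma bnd_mid {T : H → Set H} {p p' : H × H} {c c' : ℝ}
    (h : Bnd T p c) (h' : Bnd T p' c') :
    Bnd T ((1/2 : ℝ) • (p + p')) (c/2 + c'/2 - DD p p' / 8) := by
  intro q hq
  rw [tt_mid]
  have := h q hq; have := h' q hq
  have := DD_nonneg p p'
  linarith

lemma DD_mid (a p : H × H) : DD a ((1/2 : ℝ) • (a + p)) = DD a p / 4 := by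
  have e1 : a.1 - ((1/2 : ℝ) • (a + p)).1 = (1/2 : ℝ) • (a.1 - p.1) := by
    show a.1 - (1/2 : ℝ) • (a.1 + p.1) = _
    rw [smul_add, smul_sub]
    module
  have e2 : a.2 - ((1/2 : ℝ) • (a + p)).2 = (1/2 : ℝ) • (a.2 - p.2) := by
    show a.2 - (1/2 : ℝ) • (a.2 + p.2) = _
    rw [smul_add, smul_sub]
    module
  unfold DD
  rw [e1, e2, norm_smul, norm_smul]
  simp [Real.norm_eq_abs]
  ring

/-- Minty's theorem at 0: some graph point `(z, w)` has `z + w = 0`. -/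
lemma minty_zero {T : H → Set H} (hT : MaxMonotoneOpH T) :
    ∃ p ∈ graphH T, p.1 + p.2 = 0 := by
  classical
  obtain ⟨p₀, hp₀⟩ := graph_nonempty hT
  set M : Set ℝ := {c | ∃ p : H × H, Bnd T p c} with hM
  have hMne : M.Nonempty := ⟨_, p₀, bnd_graph hT.1 hp₀⟩
  have hM0 : ∀ c ∈ M, (0:ℝ) ≤ c := by
    rintro c ⟨p, hp⟩
    have := bnd_lower hT hp
    have := sq_nonneg ‖p.1 + p.2‖
    linarith
  have hMbdd : BddBelow M := ⟨0, hM0⟩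
  set m : ℝ := sInf M with hm
  have hm0 : 0 ≤ m := le_csInf hMne hM0
  -- key quadratic bound
  have key : ∀ (p p' : H × H) (c c' : ℝ), Bnd T p c → Bnd T p' c' →
      DD p p' ≤ 4 * (c + c' - 2 * m) := by
    intro p p' c c' h h'
    have hmem : (c/2 + c'/2 - DD p p' / 8) ∈ M := ⟨_, bnd_mid h h'⟩
    have := csInf_le hMbdd hmem
    rw [← hm] at this
    linarith
  -- minimizing sequence
  have hseq : ∀ n : ℕ, ∃ p : H × H, Bnd T p (m + 1/(n+1)) := by
    intro n
    have hpos : (0:ℝ) < 1/(n+1) := by positivity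
    obtain ⟨c, hc, hlt⟩ := exists_lt_of_csInf_lt hMne
      (show sInf M < m + 1/(n+1) by rw [← hm]; linarith)
    obtain ⟨p, hp⟩ := hc
    exact ⟨p, fun q hq => le_of_lt (lt_of_le_of_lt (hp q hq) hlt)⟩
  choose ps hps using hseq
  -- DD bound between sequence elements
  have hDD : ∀ n k : ℕ, DD (ps n) (ps k) ≤ 4 * (1/(n+1) + 1/(k+1)) := by
    intro n k
    have := key (ps n) (ps k) _ _ (hps n) (hps k)
    linarith
  -- the sequence is Cauchy in both coordinates
  have hcauchy : ∀ (f : H × H → H), (∀ p q, ‖f p - f q‖^2 ≤ DD p q) →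
      CauchySeq (fun n => f (ps n)) := by
    intro f hf
    rw [Metric.cauchySeq_iff']
    intro ε hε
    obtain ⟨N, hN⟩ := exists_nat_gt (8 / ε^2)
    refine ⟨N, fun n hn => ?_⟩
    have h8 : (8:ℝ)/(N+1) < ε^2 := by
      rw [div_lt_iff₀ (by positivity)]
      have h2 : 8/ε^2 < (N:ℝ) + 1 := by linarith
      calc (8:ℝ) = 8/ε^2 * ε^2 := by field_simp
        _ < ((N:ℝ)+1) * ε^2 := by
            apply mul_lt_mul_of_pos_right h2 (by positivity)
        _ = ε^2 * ((N:ℝ)+1) := by ring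
    have hd : ‖f (ps n) - f (ps N)‖^2 < ε^2 := by
      have h1 := hf (ps n) (ps N)
      have h2 := hDD n N
      have h3 : 1/((n:ℝ)+1) ≤ 1/((N:ℝ)+1) := by
        apply one_div_le_one_div_of_le (by positivity)
        have : (N:ℝ) ≤ (n:ℝ) := Nat.cast_le.mpr hn
        linarith
      have h4 : (8:ℝ)/((N:ℝ)+1) = 8*(1/((N:ℝ)+1)) := by ring
      linarith
    rw [dist_eq_norm]
    have := abs_nonneg (‖f (ps n) - f (ps N)‖)
    nlinarith [norm_nonneg (f (ps n) - f (ps N))]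
  have hc1 : CauchySeq (fun n => (ps n).1) := by
    apply hcauchy (fun p => p.1)
    intro p q
    have := sq_nonneg ‖p.2 - q.2‖
    unfold DD; linarith
  have hc2 : CauchySeq (fun n => (ps n).2) := by
    apply hcauchy (fun p => p.2)
    intro p q
    have := sq_nonneg ‖p.1 - q.1‖
    unfold DD; linarith
  obtain ⟨xb, hxb⟩ := cauchySeq_tendsto_of_complete hc1
  obtain ⟨vb, hvb⟩ := cauchySeq_tendsto_of_complete hc2
  set pb : H × H := (xb, vb) with hpb
  -- limit of 1/(n+1)
  have hlim0 : Tendsto (fun n : ℕ => m + 1/((n:ℝ)+1)) atTop (nhds m) := by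
    have := tendsto_one_div_add_atTop_nhds_zero_nat (𝕜 := ℝ)
    have h := (tendsto_const_nhds (x := m) (f := atTop (α := ℕ))).add this
    simpa using h
  -- the limit point satisfies Bnd pb m
  have hBndb : Bnd T pb m := by
    intro q hq
    have htt : Tendsto (fun n => tt (ps n) q) atTop (nhds (tt pb q)) := by
      unfold tt
      have i1 : Tendsto (fun n => ⟪(ps n).1, q.2⟫) atTop (nhds ⟪xb, q.2⟫) :=
        hxb.inner tendsto_const_nhds
      have i2 : Tendsto (fun n => ⟪q.1, (ps n).2⟫) atTop (nhds ⟪q.1, vb⟫) :=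
        tendsto_const_nhds.inner hvb
      have i3 : Tendsto (fun n => (1/2) * ‖(ps n).1‖^2) atTop (nhds ((1/2) * ‖xb‖^2)) := by
        exact (tendsto_const_nhds.mul ((hxb.norm).pow 2))
      have i4 : Tendsto (fun n => (1/2) * ‖(ps n).2‖^2) atTop (nhds ((1/2) * ‖vb‖^2)) := by
        exact (tendsto_const_nhds.mul ((hvb.norm).pow 2))
      have := (((i1.add i2).sub (tendsto_const_nhds (x := ⟪q.1, q.2⟫))).add i3).add i4
      simpa using this
    exact le_of_tendsto_of_tendsto' htt hlim0 (fun n => hps n q hq)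
  -- strong optimality, with dyadic constants
  have hstrong : ∀ k : ℕ, ∀ (p : H × H) (c : ℝ), Bnd T p c →
      m + (1/2 - (1/2)^(k+2)) * DD pb p ≤ c := by
    intro k
    induction k with
    | zero =>
      intro p c hc
      have := key pb p m c hBndb hc
      have hd := DD_nonneg pb p
      norm_num
      nlinarith
    | succ k ih =>
      intro p c hc
      have hmid := bnd_mid hBndb hc
      have := ih _ _ hmid
      rw [DD_mid] at this
      have hd := DD_nonneg pb p
      have hpow : ((1:ℝ)/2)^(k+1+2) = (1/2)^(k+2) / 2 := by ring
      rw [hpow]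
      nlinarith
  have hstrong' : ∀ (p : H × H) (c : ℝ), Bnd T p c → m + (1/2) * DD pb p ≤ c := by
    intro p c hc
    have hlim : Tendsto (fun k : ℕ => m + (1/2 - (1/2)^(k+2)) * DD pb p) atTop
        (nhds (m + (1/2 - 0) * DD pb p)) := by
      apply Tendsto.add tendsto_const_nhds
      apply Tendsto.mul_const
      apply Tendsto.const_sub
      have h0 : Tendsto (fun k : ℕ => ((1:ℝ)/2)^k) atTop (nhds 0) :=
        tendsto_pow_atTop_nhds_zero_of_lt_one (by norm_num) (by norm_num)
      have := h0.comp (tendsto_add_atTop_nat 2)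
      simpa [Function.comp_def] using this
    have := le_of_tendsto_of_tendsto' hlim tendsto_const_nhds
      (fun k => hstrong k p c hc)
    simpa using this
  -- key inequality at graph points
  have hkey : ∀ q ∈ graphH T, ‖xb + vb‖^2 ≤ ⟪q.1 + vb, q.2 + xb⟫ := by
    intro q hq
    have h1 := hstrong' q _ (bnd_graph hT.1 hq)
    have h2 := bnd_lower hT hBndb
    have e1 := norm_add_sq_real q.1 q.2
    have e2 := norm_sub_sq_real xb q.1
    have e3 := norm_sub_sq_real vb q.2
    have e4 := norm_add_sq_real xb vb
    have e5 : ⟪q.1 + vb, q.2 + xb⟫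
        = ⟪q.1, q.2⟫ + ⟪q.1, xb⟫ + ⟪vb, q.2⟫ + ⟪vb, xb⟫ := by
      simp [inner_add_left, inner_add_right]; ring
    have c1 : ⟪xb, q.1⟫ = ⟪q.1, xb⟫ := real_inner_comm _ _
    have c2 : ⟪xb, vb⟫ = ⟪vb, xb⟫ := real_inner_comm _ _
    have hDDe : DD pb q = ‖xb - q.1‖^2 + ‖vb - q.2‖^2 := rfl
    rw [hDDe] at h1
    have hp1 : pb.1 = xb := rfl
    have hp2 : pb.2 = vb := rfl
    rw [hp1, hp2] at h2
    rw [e5]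
    linarith
  -- the candidate point is in the graph
  have hmem : (-vb, -xb) ∈ graphH T := by
    apply hT.2
    intro q hq
    have h := hkey q hq
    have e : ⟪(-vb) - q.1, (-xb) - q.2⟫ = ⟪q.1 + vb, q.2 + xb⟫ := by
      have : (-vb) - q.1 = -(q.1 + vb) := by abel
      rw [this]
      have : (-xb) - q.2 = -(q.2 + xb) := by abel
      rw [this, inner_neg_neg]
    rw [e]
    have := sq_nonneg ‖xb + vb‖
    linarith
  -- conclude xb + vb = 0
  have hzero : xb + vb = 0 := by
    have h := hkey (-vb, -xb) hmem
    have e : ⟪(-vb : H) + vb, (-xb : H) + xb⟫ = 0 := by simp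
    rw [e] at h
    have := sq_nonneg ‖xb + vb‖
    have : ‖xb + vb‖^2 = 0 := le_antisymm h (sq_nonneg _)
    have hn : ‖xb + vb‖ = 0 := by
      nlinarith [norm_nonneg (xb + vb)]
    exact norm_eq_zero.mp hn
  refine ⟨(-vb, -xb), hmem, ?_⟩
  show -vb + -xb = 0
  rw [← neg_add, add_comm]
  rw [hzero, neg_zero]

/-- Minty's theorem: `I + T` is surjective. -/
lemma minty {T : H → Set H} (hT : MaxMonotoneOpH T) (u : H) :
    ∃ p ∈ graphH T, p.1 + p.2 = u := by
  set T' : H → Set H := fun a => {b | b + u ∈ T a} with hT'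
  have hgr : ∀ p : H × H, p ∈ graphH T' ↔ (p.1, p.2 + u) ∈ graphH T := by
    intro p; rfl
  have hmax : MaxMonotoneOpH T' := by
    constructor
    · intro p q hp hq
      have := hT.1 ((hgr p).mp hp) ((hgr q).mp hq)
      simpa using this
    · intro p hp
      rw [hgr]
      apply hT.2
      intro q hq
      have hq' : (q.1, q.2 - u) ∈ graphH T' := by
        rw [hgr]
        simpa using hq
      have := hp _ hq'
      have e : (p.1, p.2 + u).2 - q.2 = p.2 - (q.1, q.2 - u).2 := by
        show p.2 + u - q.2 = p.2 - (q.2 - u); abel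
      show 0 ≤ ⟪(p.1, p.2 + u).1 - q.1, (p.1, p.2 + u).2 - q.2⟫
      rw [e]
      exact this
  obtain ⟨p, hp, hsum⟩ := minty_zero hmax
  refine ⟨(p.1, p.2 + u), (hgr p).mp hp, ?_⟩
  show p.1 + (p.2 + u) = u
  have : p.1 + p.2 = 0 := hsum
  rw [← add_assoc, this, zero_add]

end ImprovedFitz

/-- Improved strong Fitzpatrick inequality in a Hilbert space. -/
theorem improved_strong_fitzpatrick (T : H → Set H) (hT : MaxMonotoneOpH T) (x v : H) :
    ((⟪x, v⟫ +
        (1 / 2) * sInf {r : ℝ | ∃ p ∈ graphH T, r = ‖x - p.1‖ ^ 2 + ‖v - p.2‖ ^ 2} : ℝ) :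
      EReal) ≤ FitzH T x v := by
  obtain ⟨p, hp, hsum⟩ := ImprovedFitz.minty hT (x + v)
  set S : Set ℝ := {r : ℝ | ∃ p ∈ graphH T, r = ‖x - p.1‖ ^ 2 + ‖v - p.2‖ ^ 2} with hS
  have hSbdd : BddBelow S := by
    refine ⟨0, ?_⟩
    rintro r ⟨q, hq, rfl⟩
    positivity
  have hSmem : ‖x - p.1‖ ^ 2 + ‖v - p.2‖ ^ 2 ∈ S := ⟨p, hp, rfl⟩
  have hinf : sInf S ≤ ‖x - p.1‖ ^ 2 + ‖v - p.2‖ ^ 2 := csInf_le hSbdd hSmem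
  -- relation: v - p.2 = p.1 - x
  have hrel : v - p.2 = p.1 - x := by
    calc v - p.2 = (x + v) - x - p.2 := by abel
      _ = (p.1 + p.2) - x - p.2 := by rw [← hsum]
      _ = p.1 - x := by abel
  have hnorm : ‖v - p.2‖ ^ 2 = ‖x - p.1‖ ^ 2 := by
    rw [hrel, ← norm_neg]
    congr 1
    abel
  have hterm : ⟪x, p.2⟫ + ⟪p.1, v⟫ - ⟪p.1, p.2⟫ = ⟪x, v⟫ + ‖x - p.1‖ ^ 2 := by
    have e : ⟪x - p.1, v - p.2⟫ = ⟪x, v⟫ - ⟪x, p.2⟫ - ⟪p.1, v⟫ + ⟪p.1, p.2⟫ := by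
      simp [inner_sub_left, inner_sub_right]; ring
    have e2 : ⟪x - p.1, v - p.2⟫ = -‖x - p.1‖ ^ 2 := by
      rw [hrel]
      have h3 : p.1 - x = -(x - p.1) := by abel
      rw [h3, inner_neg_right, real_inner_self_eq_norm_sq]
    linarith
  have hreal : ⟪x, v⟫ + (1 / 2) * sInf S ≤ ⟪x, p.2⟫ + ⟪p.1, v⟫ - ⟪p.1, p.2⟫ := by
    rw [hterm]
    linarith
  have hle : ((⟪x, p.2⟫ + ⟪p.1, v⟫ - ⟪p.1, p.2⟫ : ℝ) : EReal) ≤ FitzH T x v := by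
    unfold FitzH
    exact le_iSup₂ (f := fun q (_ : q ∈ graphH T) =>
      ((⟪x, q.2⟫ + ⟪q.1, v⟫ - ⟪q.1, q.2⟫ : ℝ) : EReal)) p hp
  exact le_trans (EReal.coe_le_coe_iff.mpr hreal) hle
end

section
/- Let X be 2-uniformly convex with constant μ > 0 (so that ‖x‖² + ‖y‖² − (1/2)‖x+y‖² ≥ (μ/2)‖x−y‖² for all x,y ∈ X). Then the normalized duality mapping J_X is strongly monotone with constant μ/2: for all x, y ∈ X, v ∈ J_X(x), w ∈ J_X(y), one has ⟨x − y, v − w⟩ ≥ (μ/2)‖x − y‖². -/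
open NormedSpace

variable {X : Type*} [NormedAddCommGroup X] [NormedSpace ℝ X]

/-- The normalized duality mapping on a `2`-uniformly convex space is strongly monotone
with constant `μ/2`. -/
theorem duality_map_strongly_monotone
    (μ : ℝ) (hμ : 0 < μ)
    (hineq : ∀ x y : X, μ / 2 * ‖x - y‖ ^ 2 ≤ ‖x‖ ^ 2 + ‖y‖ ^ 2 - (1 / 2) * ‖x + y‖ ^ 2) :
    ∀ x y : X, ∀ v ∈ JdualMap x, ∀ w ∈ JdualMap y,
      μ / 2 * ‖x - y‖ ^ 2 ≤ (v - w) (x - y) := by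
  intro x y v hv w hw
  obtain ⟨hv1, hv2⟩ := hv
  obtain ⟨hw1, hw2⟩ := hw
  set m : X := (2 : ℝ)⁻¹ • (x + y) with hm
  have hmn : ‖m‖ = 2⁻¹ * ‖x + y‖ := by
    rw [hm, norm_smul, Real.norm_eq_abs]; norm_num
  -- v y ≤ ‖m‖^2
  have key : ∀ (u : StrongDual ℝ X) (a b : X), u a = ‖a‖ * ‖u‖ → ‖u‖ = ‖a‖ →
      ((2:ℝ)⁻¹ • (a + b) = m) → u b ≤ ‖m‖ ^ 2 := by
    intro u a b h1 h2 h3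
    have hum : u m ≤ ‖a‖ * ‖m‖ := by
      calc u m ≤ ‖u‖ * ‖m‖ := (le_abs_self _).trans (by rw [← Real.norm_eq_abs]; exact u.le_opNorm m)
        _ = ‖a‖ * ‖m‖ := by rw [h2]
    have hAM : ‖a‖ * ‖m‖ ≤ 2⁻¹ * ‖a‖ ^ 2 + 2⁻¹ * ‖m‖ ^ 2 := by
      nlinarith [sq_nonneg (‖a‖ - ‖m‖)]
    have hum2 : u m = 2⁻¹ * ‖a‖ ^ 2 + 2⁻¹ * u b := by
      rw [← h3, map_smul, map_add]
      have : u a = ‖a‖ ^ 2 := by rw [h1, h2]; ring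
      simp [this]; ring
    nlinarith
  have h1 : v y ≤ ‖m‖ ^ 2 := key v x y hv1 hv2 rfl
  have h2 : w x ≤ ‖m‖ ^ 2 := key w y x hw1 hw2 (by rw [add_comm])
  have hvx : v x = ‖x‖ ^ 2 := by rw [hv1, hv2]; ring
  have hwy : w y = ‖y‖ ^ 2 := by rw [hw1, hw2]; ring
  have hxy := hineq x y
  have hval : (v - w) (x - y) = v x - v y - w x + w y := by
    simp [map_sub]; ring
  rw [hval, hvx, hwy]
  have hm2 : ‖m‖ ^ 2 = 4⁻¹ * ‖x + y‖ ^ 2 := by rw [hmn]; ring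
  nlinarith
end

section
/- Let X be a 2-uniformly convex real Banach space with constant μ > 0 and T : X ⇉ X* maximally monotone. Then for every (x,v) ∈ X × X* and λ > 0: F_T(x,v) − ⟨x,v⟩ ≥ (μ/(2λ)) · max_{x' ∈ J_X(x)} ‖x − (J_X + λT)⁻¹(x' + λv)‖². -/
open NormedSpace

variable {X : Type*} [NormedAddCommGroup X] [NormedSpace ℝ X]

set_option maxHeartbeats 1600000 in
lemma Jmono_aux (μ : ℝ) (hμ : 0 < μ) (hμ4 : 4 * μ ≤ 1) (h2uc : TwoUniformlyConvex X μ)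
    (x w : X) (x' j : StrongDual ℝ X) (hx' : x' ∈ JdualMap x) (hj : j ∈ JdualMap w)
    (hba : ‖w‖ ≤ ‖x‖) :
    μ / 2 * ‖x - w‖ ^ 2 ≤ x' (x - w) - j (x - w) := by
  obtain ⟨hx1, hx2⟩ := hx'
  obtain ⟨hj1, hj2⟩ := hj
  rw [hx2] at hx1
  rw [hj2] at hj1
  set a := ‖x‖ with ha
  set b := ‖w‖ with hb
  clear_value a b
  have hx'w_le : x' w ≤ a * b := by
    calc x' w ≤ |x' w| := le_abs_self _
    _ ≤ ‖x'‖ * ‖w‖ := by rw [← Real.norm_eq_abs]; exact x'.le_opNorm w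
    _ = a * b := by rw [hx2, ← hb]
  have hjx_le : j x ≤ b * a := by
    calc j x ≤ |j x| := le_abs_self _
    _ ≤ ‖j‖ * ‖x‖ := by rw [← Real.norm_eq_abs]; exact j.le_opNorm x
    _ = b * a := by rw [hj2, ← ha]
  rw [map_sub, map_sub]
  by_cases hb0 : b = 0
  · have hw0 : w = 0 := norm_eq_zero.mp (by rw [← hb]; exact hb0)
    have hj0 : j = 0 := norm_eq_zero.mp (by rw [hj2]; exact hb0)
    subst hw0
    simp only [hj0, ContinuousLinearMap.zero_apply, map_zero, sub_zero]
    rw [hx1]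
    nlinarith [norm_nonneg x]
  · have hbpos : 0 < b := lt_of_le_of_ne (by rw [hb]; exact norm_nonneg w) (Ne.symm hb0)
    have hapos : 0 < a := lt_of_lt_of_le hbpos hba
    by_cases hcase : a ≤ 4 * b
    · -- main uniform convexity case
      set u := a⁻¹ • x with hu_def
      set z := b⁻¹ • w with hz_def
      have hu : ‖u‖ = 1 := by
        rw [hu_def, norm_smul, Real.norm_eq_abs, abs_of_pos (inv_pos.mpr hapos), ← ha]
        field_simp [ne_of_gt hapos]
      have hz : ‖z‖ = 1 := by
        rw [hz_def, norm_smul, Real.norm_eq_abs, abs_of_pos (inv_pos.mpr hbpos), ← hb]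
        field_simp [ne_of_gt hbpos]
      set ε := ‖u - z‖ with hε_def
      have hε0 : 0 ≤ ε := norm_nonneg _
      have hε2 : ε ≤ 2 := by
        calc ε ≤ ‖u‖ + ‖z‖ := norm_sub_le _ _
        _ = 2 := by rw [hu, hz]; norm_num
      have key := h2uc ε ⟨hε0, hε2⟩ u z hu hz le_rfl
      have huz : ‖u + z‖ ≤ 2 - 2 * μ * ε ^ 2 := by
        rw [norm_smul, Real.norm_eq_abs] at key
        have : |(2:ℝ)⁻¹| = 2⁻¹ := by norm_num
        rw [this] at key
        linarith
      have hau : a • u = x := by rw [hu_def, smul_smul, mul_inv_cancel₀ (ne_of_gt hapos), one_smul]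
      have hbz : b • z = w := by rw [hz_def, smul_smul, mul_inv_cancel₀ (ne_of_gt hbpos), one_smul]
      clear_value ε
      clear_value u z
      -- x' bound
      have hx'uz : x' (u + z) ≤ a * ‖u + z‖ := by
        calc x' (u + z) ≤ |x' (u + z)| := le_abs_self _
        _ ≤ ‖x'‖ * ‖u + z‖ := by rw [← Real.norm_eq_abs]; exact x'.le_opNorm _
        _ = a * ‖u + z‖ := by rw [hx2]
      have hx'u : x' u = a := by
        rw [hu_def, map_smul, smul_eq_mul, hx1, ← mul_assoc,
          inv_mul_cancel₀ (ne_of_gt hapos), one_mul]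
      have hx'z : x' w = b * x' z := by
        conv_lhs => rw [← hbz]
        rw [map_smul, smul_eq_mul]
      have hx'w_uc : x' w ≤ a * b - 2 * μ * a * b * ε ^ 2 := by
        have h1 : x' (u + z) = a + x' z := by rw [map_add, hx'u]
        have h2 : x' z ≤ a - 2 * μ * a * ε ^ 2 := by
          have := hx'uz
          rw [h1] at this
          nlinarith [mul_le_mul_of_nonneg_left huz hapos.le]
        rw [hx'z]
        nlinarith [mul_le_mul_of_nonneg_left h2 hbpos.le]
      -- j bound
      have hjuz : j (u + z) ≤ b * ‖u + z‖ := by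
        calc j (u + z) ≤ |j (u + z)| := le_abs_self _
        _ ≤ ‖j‖ * ‖u + z‖ := by rw [← Real.norm_eq_abs]; exact j.le_opNorm _
        _ = b * ‖u + z‖ := by rw [hj2]
      have hjz : j z = b := by
        rw [hz_def, map_smul, smul_eq_mul, hj1, ← mul_assoc,
          inv_mul_cancel₀ (ne_of_gt hbpos), one_mul]
      have hju : j x = a * j u := by
        conv_lhs => rw [← hau]
        rw [map_smul, smul_eq_mul]
      have hjx_uc : j x ≤ a * b - 2 * μ * a * b * ε ^ 2 := by
        have h1 : j (u + z) = j u + b := by rw [map_add, hjz]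
        have h2 : j u ≤ b - 2 * μ * b * ε ^ 2 := by
          have := hjuz
          rw [h1] at this
          nlinarith [mul_le_mul_of_nonneg_left huz hbpos.le]
        rw [hju]
        nlinarith [mul_le_mul_of_nonneg_left h2 hapos.le]
      -- norm bound
      have hxw : ‖x - w‖ ≤ a * ε + (a - b) := by
        have hrepr : x - w = a • (u - z) + (a - b) • z := by
          rw [smul_sub, hau, sub_smul, hbz]
          abel
        calc ‖x - w‖ = ‖a • (u - z) + (a - b) • z‖ := by rw [hrepr]
        _ ≤ ‖a • (u - z)‖ + ‖(a - b) • z‖ := norm_add_le _ _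
        _ = a * ε + (a - b) := by
            rw [norm_smul, norm_smul, Real.norm_eq_abs, Real.norm_eq_abs, hz,
              abs_of_pos hapos, abs_of_nonneg (by linarith : (0:ℝ) ≤ a - b), ← hε_def]
            ring
      have hn2 : ‖x - w‖ ^ 2 ≤ (a * ε + (a - b)) ^ 2 := by
        nlinarith [norm_nonneg (x - w)]
      rw [hx1, hj1]
      nlinarith [mul_nonneg (mul_nonneg hμ.le (sq_nonneg ε)) (mul_nonneg hapos.le
          (by linarith : (0:ℝ) ≤ 4 * b - a)),
        mul_nonneg (by linarith : (0:ℝ) ≤ 1 - μ) (sq_nonneg (a - b)),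
        mul_nonneg hμ.le (sq_nonneg (a * ε - (a - b)))]
    · -- far-apart case
      push_neg at hcase
      have hxw : ‖x - w‖ ≤ a + b := by rw [ha, hb]; exact norm_sub_le x w
      have hn2 : ‖x - w‖ ^ 2 ≤ (a + b) ^ 2 := by
        nlinarith [norm_nonneg (x - w)]
      rw [hx1, hj1]
      nlinarith [mul_nonneg hapos.le (by linarith : (0:ℝ) ≤ a - 4 * b),
        mul_nonneg hbpos.le (by linarith : (0:ℝ) ≤ a - 4 * b),
        mul_nonneg (by linarith : (0:ℝ) ≤ 1 - 4 * μ) (sq_nonneg (a + b)),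
        mul_pos hapos hbpos]

lemma Jmono (μ : ℝ) (hμ : 0 < μ) (h2uc : TwoUniformlyConvex X μ)
    (x w : X) (x' j : StrongDual ℝ X) (hx' : x' ∈ JdualMap x) (hj : j ∈ JdualMap w) :
    μ / 2 * ‖x - w‖ ^ 2 ≤ x' (x - w) - j (x - w) := by
  by_cases hxw : x = w
  · subst hxw
    simp
  · have hne : x - w ≠ 0 := sub_ne_zero.mpr hxw
    have hnpos : 0 < ‖x - w‖ := norm_pos_iff.mpr hne
    have hμ4 : 4 * μ ≤ 1 := by
      set e := ‖x - w‖⁻¹ • (x - w) with he_def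
      have he : ‖e‖ = 1 := by
        rw [he_def, norm_smul, Real.norm_eq_abs, abs_of_pos (inv_pos.mpr hnpos)]
        field_simp
      have hee : (2:ℝ) ≤ ‖e - (-e)‖ := by
        rw [sub_neg_eq_add, ← two_smul ℝ, norm_smul, Real.norm_eq_abs, he]
        norm_num
      have := h2uc 2 ⟨by norm_num, le_rfl⟩ e (-e) he (by rw [norm_neg, he]) hee
      simp only [add_neg_cancel, smul_zero, norm_zero, sub_zero] at this
      nlinarith
    rcases le_total ‖w‖ ‖x‖ with h | h
    · exact Jmono_aux μ hμ hμ4 h2uc x w x' j hx' hj h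
    · have h2 := Jmono_aux μ hμ hμ4 h2uc w x j x' hj hx' h
      have h3 : w - x = -(x - w) := by abel
      rw [h3, map_neg, map_neg, norm_neg] at h2
      linarith

/-- Carlier-type inequality on a `2`-uniformly convex Banach space, in terms of the
normalized duality mapping. -/
theorem carlier_inequality_two_uniformly_convex [CompleteSpace X]
    (μ : ℝ) (hμ : 0 < μ) (h2uc : TwoUniformlyConvex X μ)
    (T : X → Set (StrongDual ℝ X)) (hT : MaxMonotoneOpB T)
    (x : X) (v : StrongDual ℝ X) (lam : ℝ) (hlam : 0 < lam) :
    ∀ x' ∈ JdualMap x, ∀ w : X,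
      (∃ j ∈ JdualMap w, ∃ t ∈ T w, x' + lam • v = j + lam • t) →
      ((v x + μ / (2 * lam) * ‖x - w‖ ^ 2 : ℝ) : EReal) ≤ FitzB T x v := by
  intro x' hx' w hw
  obtain ⟨j, hj, t, ht, heq⟩ := hw
  have hmono := Jmono μ hμ h2uc x w x' j hx' hj
  have happ : x' (x - w) + lam * v (x - w) = j (x - w) + lam * t (x - w) := by
    have h0 := congrArg (fun f : StrongDual ℝ X => f (x - w)) heq
    simpa using h0
  have hv : v (x - w) = v x - v w := map_sub v x w
  have ht' : t (x - w) = t x - t w := map_sub t x w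
  have hkey : v x + μ / (2 * lam) * ‖x - w‖ ^ 2 ≤ t x + v w - t w := by
    have hdiv : μ / (2 * lam) * ‖x - w‖ ^ 2 ≤ t (x - w) - v (x - w) := by
      have h1 : μ / 2 * ‖x - w‖ ^ 2 ≤ lam * (t (x - w) - v (x - w)) := by linarith
      rw [div_mul_eq_mul_div, div_le_iff₀ (by positivity : (0:ℝ) < 2 * lam)]
      linarith
    rw [hv, ht'] at hdiv
    linarith
  calc ((v x + μ / (2 * lam) * ‖x - w‖ ^ 2 : ℝ) : EReal)
      ≤ ((t x + v w - t w : ℝ) : EReal) := EReal.coe_le_coe_iff.mpr hkey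
    _ ≤ FitzB T x v := by
        exact le_iSup₂ (f := fun (p : X × StrongDual ℝ X) (_ : p ∈ graphB T) =>
          ((p.2 x + v p.1 - p.2 p.1 : ℝ) : EReal)) (w, t) ht
end

section
/- For p ∈ (1, 2], the space L^p is 2-uniformly convex with constant (p−1)/8; that is, its modulus of convexity satisfies δ_{L^p}(ε) ≥ ((p−1)/8) ε² for all ε ∈ [0,2]. -/
open MeasureTheory Real Set
open scoped ENNReal NNReal

section Aux

variable {p : ℝ}

lemma sq_rpow_half (hp0 : 0 < p) (y : ℝ) : ((y^2 : ℝ))^(p/2) = |y|^p := by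
  rw [← sq_abs, ← Real.rpow_natCast |y| 2, ← Real.rpow_mul (abs_nonneg y)]
  congr 1
  push_cast
  ring

lemma aux_sec (hp : 1 < p) (hp2 : p ≤ 2) {t : ℝ} (ht : 0 < t) (ht1 : t < 1) :
    2 ≤ (1+t)^(p-2) + (1-t)^(p-2) := by
  set a := (1+t)^(p-2) with ha
  set b := (1-t)^(p-2) with hb
  have hpa : (0:ℝ) < a := rpow_pos_of_pos (by linarith) _
  have hpb : (0:ℝ) < b := rpow_pos_of_pos (by linarith) _
  have hab : 1 ≤ a * b := by
    rw [ha, hb, ← Real.mul_rpow (by linarith) (by linarith)]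
    have h1 : (1+t)*(1-t) = 1 - t^2 := by ring
    rw [h1]
    exact Real.one_le_rpow_of_pos_of_le_one_of_nonpos (by nlinarith) (by nlinarith) (by linarith)
  nlinarith [sq_nonneg (a - b), sq_nonneg (a + b - 2)]

lemma key1b (hp : 1 < p) (hp2 : p ≤ 2) {t : ℝ} (ht : 0 ≤ t) (ht1 : t ≤ 1) :
    2 + p*(p-1)*t^2 ≤ (1+t)^p + (1-t)^p := by
  set h : ℝ → ℝ := fun t => (1+t)^p + (1-t)^p - 2 - p*(p-1)*t^2 with hh
  set h₁ : ℝ → ℝ := fun t => p*(1+t)^(p-1) - p*(1-t)^(p-1) - 2*p*(p-1)*t with hh₁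
  have hd : ∀ x : ℝ, HasDerivAt h (h₁ x) x := by
    intro x
    have d1 : HasDerivAt (fun t : ℝ => (1+t)^p) (p*(1+x)^(p-1)) x := by
      have := (Real.hasDerivAt_rpow_const (x := 1+x) (p := p) (Or.inr hp.le)).comp x
        ((hasDerivAt_id x).const_add 1)
      simpa [Function.comp_def] using this
    have d2 : HasDerivAt (fun t : ℝ => (1-t)^p) (-(p*(1-x)^(p-1))) x := by
      have := (Real.hasDerivAt_rpow_const (x := 1-x) (p := p) (Or.inr hp.le)).comp x
        ((hasDerivAt_id x).neg.const_add 1)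
      simpa [Function.comp_def] using this
    have d3 : HasDerivAt (fun t : ℝ => p*(p-1)*t^2) (2*p*(p-1)*x) x := by
      have := ((hasDerivAt_pow 2 x).const_mul (p*(p-1)))
      simpa using this.congr_deriv (by ring)
    simpa [hh, hh₁, Pi.add_def, Pi.sub_def] using ((d1.add d2).sub (hasDerivAt_const x 2)).sub d3 |>.congr_deriv (by ring)
  -- derivative of h₁ on (0,1)
  have hd1 : ∀ x ∈ Ioo (0:ℝ) 1, HasDerivAt h₁
      (p*(p-1)*((1+x)^(p-2) + (1-x)^(p-2) - 2)) x := by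
    intro x hx
    obtain ⟨hx0, hx1⟩ := hx
    have e1 : HasDerivAt (fun t : ℝ => (1+t)^(p-1)) ((p-1)*(1+x)^(p-2)) x := by
      have := (Real.hasDerivAt_rpow_const (x := 1+x) (p := p-1)
        (Or.inl (by linarith))).comp x ((hasDerivAt_id x).const_add 1)
      simpa [Function.comp_def, show p-1-1 = p-2 by ring] using this
    have e2 : HasDerivAt (fun t : ℝ => (1-t)^(p-1)) (-((p-1)*(1-x)^(p-2))) x := by
      have := (Real.hasDerivAt_rpow_const (x := 1-x) (p := p-1)
        (Or.inl (by intro hc; nlinarith))).comp x ((hasDerivAt_id x).neg.const_add 1)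
      simpa [Function.comp_def, show p-1-1 = p-2 by ring] using this
    have e3 : HasDerivAt (fun t : ℝ => 2*p*(p-1)*t) (2*p*(p-1)) x := by
      simpa using (hasDerivAt_id x).const_mul (2*p*(p-1))
    simpa [hh₁, Pi.sub_def] using ((e1.const_mul p).sub (e2.const_mul p)).sub e3 |>.congr_deriv (by ring)
  -- h₁ is continuous on [0,1]
  have hc1 : ContinuousOn h₁ (Icc (0:ℝ) 1) := by
    intro x hx
    obtain ⟨hx0, hx1⟩ := hx
    have c1 : ContinuousAt (fun t : ℝ => (1+t)^(p-1)) x :=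
      (Real.continuousAt_rpow_const _ _ (Or.inl (by linarith))).comp (by fun_prop)
    have c2 : ContinuousAt (fun t : ℝ => (1-t)^(p-1)) x :=
      (Real.continuousAt_rpow_const _ _ (Or.inr (by linarith))).comp (by fun_prop)
    have c3 : ContinuousAt (fun t : ℝ => 2*p*(p-1)*t) x := by fun_prop
    have c4 : ContinuousAt h₁ x := ((c1.const_mul p).sub (c2.const_mul p)).sub c3
    exact c4.continuousWithinAt
  have h₁0 : h₁ 0 = 0 := by simp [hh₁]
  have h₁nonneg : ∀ x ∈ Icc (0:ℝ) 1, 0 ≤ h₁ x := by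
    have mono : MonotoneOn h₁ (Icc (0:ℝ) 1) := by
      apply monotoneOn_of_deriv_nonneg (convex_Icc 0 1) hc1
      · intro x hx
        rw [interior_Icc] at hx
        exact (hd1 x hx).differentiableAt.differentiableWithinAt
      · intro x hx
        rw [interior_Icc] at hx
        rw [(hd1 x hx).deriv]
        have := aux_sec hp hp2 hx.1 hx.2
        exact mul_nonneg (by nlinarith) (by linarith)
    intro x hx
    rw [← h₁0]
    exact mono (by simp) hx hx.1
  have hnonneg : 0 ≤ h t := by
    have mono : MonotoneOn h (Icc (0:ℝ) 1) := by
      apply monotoneOn_of_deriv_nonneg (convex_Icc 0 1)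
        (fun x _ => (hd x).continuousAt.continuousWithinAt)
      · intro x hx
        exact (hd x).differentiableAt.differentiableWithinAt
      · intro x hx
        rw [interior_Icc] at hx
        rw [(hd x).deriv]
        exact h₁nonneg x ⟨hx.1.le, hx.2.le⟩
    have h0 : h 0 = 0 := by norm_num [hh]
    have := mono (by simp) ⟨ht, ht1⟩ ht
    rw [h0] at this
    exact this
  simp only [hh] at hnonneg
  linarith


lemma key1 (hp : 1 < p) (hp2 : p ≤ 2) {t : ℝ} (ht : 0 ≤ t) (ht1 : t ≤ 1) :
    (1+(p-1)*t^2)^(p/2) ≤ ((1+t)^p + (1-t)^p)/2 := by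
  have b := rpow_one_add_le_one_add_mul_self (s := (p-1)*t^2) (by nlinarith)
    (p := p/2) (by linarith) (by linarith)
  have := key1b hp hp2 ht ht1
  nlinarith

lemma key2 (hp : 1 < p) (hp2 : p ≤ 2) {u v : ℝ} (hu : 0 ≤ u) (hv : 0 ≤ v) (hvu : v ≤ u) :
    (u^2+(p-1)*v^2)^(p/2) ≤ ((u+v)^p + (u-v)^p)/2 := by
  rcases eq_or_lt_of_le hu with h0 | hupos
  · have hv0 : v = 0 := le_antisymm (by linarith) hv
    rw [← h0, hv0]
    rw [show ((0:ℝ)^2+(p-1)*0^2) = 0 by ring, Real.zero_rpow (by positivity)]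
    rw [show (0:ℝ)+0 = 0 by ring, show (0:ℝ)-0 = 0 by ring, Real.zero_rpow (by positivity)]
    norm_num
  · set t := v/u with htdef
    have ht : 0 ≤ t := div_nonneg hv hupos.le
    have ht1 : t ≤ 1 := (div_le_one hupos).2 hvu
    have hup : (0:ℝ) < u^p := rpow_pos_of_pos hupos _
    have hbase : u^2+(p-1)*v^2 = u^2*(1+(p-1)*t^2) := by
      rw [htdef]; field_simp
    have h2p : ((u:ℝ)^2)^(p/2) = u^p := by
      rw [← Real.rpow_natCast u 2, ← Real.rpow_mul hupos.le]
      congr 1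
      push_cast
      ring
    have lhs_eq : (u^2+(p-1)*v^2)^(p/2) = u^p * (1+(p-1)*t^2)^(p/2) := by
      rw [hbase, Real.mul_rpow (by positivity) (by nlinarith), h2p]
    have r1 : (u+v)^p = u^p * (1+t)^p := by
      rw [show u+v = u*(1+t) by rw [htdef]; field_simp, Real.mul_rpow hupos.le (by linarith)]
    have r2 : (u-v)^p = u^p * (1-t)^p := by
      rw [show u-v = u*(1-t) by rw [htdef]; field_simp, Real.mul_rpow hupos.le (by linarith)]
    rw [lhs_eq, r1, r2]
    have := key1 hp hp2 ht ht1
    calc u^p * (1+(p-1)*t^2)^(p/2) ≤ u^p * (((1+t)^p + (1-t)^p)/2) :=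
          mul_le_mul_of_nonneg_left this hup.le
      _ = (u^p*(1+t)^p + u^p*(1-t)^p)/2 := by ring

lemma abs_id (p : ℝ) (u v : ℝ) :
    |u+v|^p + |u-v|^p = (|u|+|v|)^p + (abs (|u| - |v|))^p := by
  rcases le_total 0 u with hu | hu <;> rcases le_total 0 v with hv | hv
  · rw [abs_of_nonneg hu, abs_of_nonneg hv, abs_of_nonneg (by linarith : 0 ≤ u + v)]
  · rw [abs_of_nonneg hu, abs_of_nonpos hv, abs_of_nonneg (by linarith : 0 ≤ u - v),
      show u - -v = u + v by ring, show u + -v = u - v by ring]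
    ring
  · rw [abs_of_nonpos hu, abs_of_nonneg hv, abs_of_nonpos (by linarith : u - v ≤ 0),
      show -u - v = -(u+v) by ring, abs_neg, show -(u-v) = -u + v by ring]
    ring
  · rw [abs_of_nonpos hu, abs_of_nonpos hv, abs_of_nonpos (by linarith : u + v ≤ 0),
      show -u - -v = -(u-v) by ring, abs_neg, show -(u+v) = -u + -v by ring]

lemma key3' (hp : 1 < p) (hp2 : p ≤ 2) (u v : ℝ) :
    (u^2+(p-1)*v^2)^(p/2) ≤ (|u+v|^p + |u-v|^p)/2 := by
  rw [abs_id p u v]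
  rcases le_total (|v|) (|u|) with h | h
  · have := key2 hp hp2 (abs_nonneg u) (abs_nonneg v) h
    rw [abs_of_nonneg (by linarith : (0:ℝ) ≤ |u| - |v|)]
    calc (u^2+(p-1)*v^2)^(p/2) = (|u|^2+(p-1)*|v|^2)^(p/2) := by rw [sq_abs, sq_abs]
      _ ≤ _ := this
  · have := key2 hp hp2 (abs_nonneg v) (abs_nonneg u) h
    have husq : u^2 ≤ v^2 := by
      rw [← sq_abs u, ← sq_abs v]; exact pow_le_pow_left₀ (abs_nonneg u) h 2
    calc (u^2+(p-1)*v^2)^(p/2) ≤ (|v|^2+(p-1)*|u|^2)^(p/2) := by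
          apply Real.rpow_le_rpow (by nlinarith [sq_nonneg u, sq_nonneg v]) _ (by linarith)
          rw [sq_abs, sq_abs]; nlinarith
      _ ≤ ((|v|+|u|)^p + (|v|-|u|)^p)/2 := this
      _ = _ := by
          rw [add_comm (|v|) (|u|), abs_sub_comm, abs_of_nonneg (by linarith : (0:ℝ) ≤ |v| - |u|)]

lemma key3 (hp : 1 < p) (hp2 : p ≤ 2) (x y : ℝ) :
    (((x+y)/2)^2 + (p-1)*((x-y)/2)^2)^(p/2) ≤ (|x|^p + |y|^p)/2 := by
  have := key3' hp hp2 ((x+y)/2) ((x-y)/2)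
  rw [show (x+y)/2+(x-y)/2 = x by ring, show (x+y)/2-(x-y)/2 = y by ring] at this
  exact this

variable {r : ℝ}

lemma ptR (hr0 : 0 < r) (hr1 : r ≤ 1) {l m x y : ℝ} (hl : 0 ≤ l) (hm : 0 ≤ m)
    (hlm : l + m = 1) (hx : 0 ≤ x) (hy : 0 ≤ y) :
    l^(1-r)*x^r + m^(1-r)*y^r ≤ (x+y)^r := by
  rcases eq_or_lt_of_le hr1 with rfl | hr1'
  · simp only [sub_self, Real.rpow_zero, Real.rpow_one, one_mul]
    linarith
  have e : ∀ {c z : ℝ}, 0 < c → 0 ≤ z → c * (z/c)^r = c^(1-r) * z^r := by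
    intro c z hc hz
    rw [Real.div_rpow hz hc.le, Real.rpow_sub hc, Real.rpow_one]
    field_simp
  rcases eq_or_lt_of_le hl with rfl | hl'
  · have hm1 : m = 1 := by linarith
    rw [hm1, Real.zero_rpow (by linarith : (1:ℝ)-r ≠ 0), Real.one_rpow, zero_mul, zero_add,
      one_mul]
    exact Real.rpow_le_rpow hy (by linarith) hr0.le
  rcases eq_or_lt_of_le hm with rfl | hm'
  · have hl1 : l = 1 := by linarith
    rw [hl1, Real.zero_rpow (by linarith : (1:ℝ)-r ≠ 0), Real.one_rpow, zero_mul, add_zero,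
      one_mul]
    exact Real.rpow_le_rpow hx (by linarith) hr0.le
  have cc := (Real.concaveOn_rpow (by linarith : (0:ℝ) ≤ r) hr1).2
    (show x/l ∈ Ici (0:ℝ) from div_nonneg hx hl'.le)
    (show y/m ∈ Ici (0:ℝ) from div_nonneg hy hm'.le) hl'.le hm'.le hlm
  simp only [smul_eq_mul] at cc
  rw [mul_div_cancel₀ _ (ne_of_gt hl'), mul_div_cancel₀ _ (ne_of_gt hm')] at cc
  rw [e hl' hx, e hm' hy] at cc
  exact cc

lemma ptE (hr0 : 0 < r) (hr1 : r ≤ 1) {l m : ℝ≥0∞} (hlm : l + m = 1) (x y : ℝ≥0∞) :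
    l^(1-r) * x^r + m^(1-r) * y^r ≤ (x+y)^r := by
  have hlt : l ≠ ⊤ := fun h => by simp [h] at hlm
  have hmt : m ≠ ⊤ := fun h => by simp [h] at hlm
  rcases eq_or_ne x ⊤ with rfl | hxt
  · rw [top_add, ENNReal.top_rpow_of_pos hr0]
    exact le_top
  rcases eq_or_ne y ⊤ with rfl | hyt
  · rw [add_top, ENNReal.top_rpow_of_pos hr0]
    exact le_top
  lift l to ℝ≥0 using hlt
  lift m to ℝ≥0 using hmt
  lift x to ℝ≥0 using hxt
  lift y to ℝ≥0 using hyt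
  rw [← ENNReal.coe_rpow_of_nonneg l (by linarith : (0:ℝ) ≤ 1-r),
    ← ENNReal.coe_rpow_of_nonneg m (by linarith : (0:ℝ) ≤ 1-r),
    ← ENNReal.coe_rpow_of_nonneg x hr0.le, ← ENNReal.coe_rpow_of_nonneg y hr0.le,
    ← ENNReal.coe_add, ← ENNReal.coe_rpow_of_nonneg _ hr0.le,
    ← ENNReal.coe_mul, ← ENNReal.coe_mul, ← ENNReal.coe_add, ENNReal.coe_le_coe,
    ← NNReal.coe_le_coe]
  push_cast
  have hlm2 : l + m = 1 := by exact_mod_cast hlm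
  have hlm' : (l:ℝ) + (m:ℝ) = 1 := by exact_mod_cast hlm2
  exact ptR hr0 hr1 l.coe_nonneg m.coe_nonneg hlm' x.coe_nonneg y.coe_nonneg

/-- Reverse Minkowski / superadditivity of the `L^r` "norm" for `0 < r ≤ 1`. -/
lemma revMink {α : Type*} [MeasurableSpace α] (μ : Measure α) (hr0 : 0 < r) (hr1 : r ≤ 1)
    {a b : α → ℝ≥0∞} (ha : AEMeasurable a μ) (hb : AEMeasurable b μ) :
    (∫⁻ x, a x ^ r ∂μ)^(1/r) + (∫⁻ x, b x ^ r ∂μ)^(1/r)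
      ≤ (∫⁻ x, (a x + b x) ^ r ∂μ)^(1/r) := by
  set Ia := ∫⁻ x, a x ^ r ∂μ with hIa
  set Ib := ∫⁻ x, b x ^ r ∂μ with hIb
  have hmono_a : Ia ≤ ∫⁻ x, (a x + b x) ^ r ∂μ :=
    lintegral_mono fun x => ENNReal.rpow_le_rpow le_self_add hr0.le
  have hmono_b : Ib ≤ ∫⁻ x, (a x + b x) ^ r ∂μ :=
    lintegral_mono fun x => ENNReal.rpow_le_rpow le_add_self hr0.le
  rcases eq_or_ne Ia 0 with hA0 | hA0
  · rw [hA0, ENNReal.zero_rpow_of_pos (by positivity), zero_add]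
    exact ENNReal.rpow_le_rpow hmono_b (by positivity)
  rcases eq_or_ne Ib 0 with hB0 | hB0
  · rw [hB0, ENNReal.zero_rpow_of_pos (by positivity), add_zero]
    exact ENNReal.rpow_le_rpow hmono_a (by positivity)
  rcases eq_or_ne Ia ⊤ with hAt | hAt
  · have : (∫⁻ x, (a x + b x) ^ r ∂μ) = ⊤ := top_le_iff.mp (hAt ▸ hmono_a)
    rw [this, ENNReal.top_rpow_of_pos (by positivity)]
    exact le_top
  rcases eq_or_ne Ib ⊤ with hBt | hBt
  · have : (∫⁻ x, (a x + b x) ^ r ∂μ) = ⊤ := top_le_iff.mp (hBt ▸ hmono_b)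
    rw [this, ENNReal.top_rpow_of_pos (by positivity)]
    exact le_top
  set A := Ia ^ (1/r) with hA
  set B := Ib ^ (1/r) with hB
  have hArp : A ^ r = Ia := by
    rw [hA, ← ENNReal.rpow_mul, one_div_mul_cancel hr0.ne', ENNReal.rpow_one]
  have hBrp : B ^ r = Ib := by
    rw [hB, ← ENNReal.rpow_mul, one_div_mul_cancel hr0.ne', ENNReal.rpow_one]
  have hA0' : A ≠ 0 := by simp [hA, ENNReal.rpow_eq_zero_iff, hA0, hAt]
  have hAt' : A ≠ ⊤ := by simp [hA, ENNReal.rpow_eq_top_iff, hA0, hAt]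
  have hB0' : B ≠ 0 := by simp [hB, ENNReal.rpow_eq_zero_iff, hB0, hBt]
  have hBt' : B ≠ ⊤ := by simp [hB, ENNReal.rpow_eq_top_iff, hB0, hBt]
  set S := A + B with hS
  have hS0 : S ≠ 0 := by simp [hS, hA0']
  have hSt : S ≠ ⊤ := by simp [hS, ENNReal.add_eq_top, hAt', hBt']
  have hlm : A/S + B/S = 1 := by rw [ENNReal.div_add_div_same, ← hS, ENNReal.div_self hS0 hSt]
  -- pointwise bound
  have hpt : ∀ x, (A/S)^(1-r) * a x ^ r + (B/S)^(1-r) * b x ^ r ≤ (a x + b x)^r :=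
    fun x => ptE hr0 hr1 hlm (a x) (b x)
  have hint : (A/S)^(1-r) * Ia + (B/S)^(1-r) * Ib ≤ ∫⁻ x, (a x + b x) ^ r ∂μ := by
    have h1 : ∫⁻ x, ((A/S)^(1-r) * a x ^ r + (B/S)^(1-r) * b x ^ r) ∂μ
        ≤ ∫⁻ x, (a x + b x) ^ r ∂μ := lintegral_mono hpt
    rwa [lintegral_add_left' ((ha.pow_const r).const_mul _),
      lintegral_const_mul'' _ (ha.pow_const r), lintegral_const_mul'' _ (hb.pow_const r)]
      at h1
  have h1r : (0:ℝ) ≤ 1 - r := by linarith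
  have t1 : (A/S)^(1-r) * Ia = A * (S^(1-r))⁻¹ := by
    rw [← hArp, ENNReal.div_rpow_of_nonneg _ _ h1r, div_eq_mul_inv, mul_right_comm,
      ← ENNReal.rpow_add _ _ hA0' hAt', show (1-r)+r = 1 by ring, ENNReal.rpow_one]
  have t2 : (B/S)^(1-r) * Ib = B * (S^(1-r))⁻¹ := by
    rw [← hBrp, ENNReal.div_rpow_of_nonneg _ _ h1r, div_eq_mul_inv, mul_right_comm,
      ← ENNReal.rpow_add _ _ hB0' hBt', show (1-r)+r = 1 by ring, ENNReal.rpow_one]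
  have hpow0 : S^(1-r) ≠ 0 := by simp [ENNReal.rpow_eq_zero_iff, hS0, hSt]
  have hpowt : S^(1-r) ≠ ⊤ := by simp [ENNReal.rpow_eq_top_iff, hS0, hSt]
  have hcalc : (A/S)^(1-r) * Ia + (B/S)^(1-r) * Ib = S ^ r := by
    rw [t1, t2, ← add_mul, ← hS]
    calc S * (S^(1-r))⁻¹ = (S^r * S^(1-r)) * (S^(1-r))⁻¹ := by
          rw [← ENNReal.rpow_add _ _ hS0 hSt, show r+(1-r) = 1 by ring, ENNReal.rpow_one]
      _ = S^r := by rw [mul_assoc, ENNReal.mul_inv_cancel hpow0 hpowt, mul_one]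
  have hfin := ENNReal.rpow_le_rpow (hcalc ▸ hint) (one_div_nonneg.mpr hr0.le)
  rwa [← ENNReal.rpow_mul, mul_one_div_cancel hr0.ne', ENNReal.rpow_one] at hfin

variable {Ω : Type*} [MeasurableSpace Ω] {ν : Measure Ω}


variable {Ω : Type*} [MeasurableSpace Ω] {ν : Measure Ω} {p : ℝ}


/-- The Ball–Carlen–Lieb two-uniform convexity inequality in `L^p`, `1 < p ≤ 2`. -/
lemma bcl (hp : 1 < p) (hp2 : p ≤ 2) [Fact (1 ≤ ENNReal.ofReal p)]
    (f g : Lp ℝ (ENNReal.ofReal p) ν) (hf : ‖f‖ = 1) (hg : ‖g‖ = 1) :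
    ‖(2:ℝ)⁻¹ • (f + g)‖^2 + (p-1) * ‖(2:ℝ)⁻¹ • (f - g)‖^2 ≤ 1 := by
  have hp0 : (0:ℝ) < p := by linarith
  have hp0' : p ≠ 0 := hp0.ne'
  have hq0 : ENNReal.ofReal p ≠ 0 := ne_of_gt (ENNReal.ofReal_pos.2 hp0)
  have hqt : ENNReal.ofReal p ≠ ⊤ := ENNReal.ofReal_ne_top
  have hqr : (ENNReal.ofReal p).toReal = p := ENNReal.toReal_ofReal hp0.le
  set r := p/2 with hr
  have hr0 : (0:ℝ) < r := by rw [hr]; linarith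
  have hr1 : r ≤ 1 := by rw [hr]; linarith
  have Ieq : ∀ h : Lp ℝ (ENNReal.ofReal p) ν,
      (∫⁻ x, (‖h x‖₊ : ℝ≥0∞) ^ p ∂ν) = (eLpNorm (⇑h) (ENNReal.ofReal p) ν) ^ p := by
    intro h
    rw [eLpNorm_eq_lintegral_rpow_enorm_toReal hq0 hqt, hqr, ← ENNReal.rpow_mul,
      one_div_mul_cancel hp0', ENNReal.rpow_one]
    rfl
  have hE1 : ∀ h : Lp ℝ (ENNReal.ofReal p) ν, ‖h‖ = 1 →
      eLpNorm (⇑h) (ENNReal.ofReal p) ν = 1 := by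
    intro h hh
    rw [← ENNReal.ofReal_one, ← hh, Lp.norm_def,
      ENNReal.ofReal_toReal (Lp.eLpNorm_ne_top h)]
  set c := ENNReal.ofReal (p-1) with hc
  set a : Ω → ℝ≥0∞ := fun x => ENNReal.ofReal (((f x + g x)/2)^2) with ha
  set b : Ω → ℝ≥0∞ := fun x => c * ENNReal.ofReal (((f x - g x)/2)^2) with hb
  have hfm : AEMeasurable (⇑f) ν := (Lp.aestronglyMeasurable f).aemeasurable
  have hgm : AEMeasurable (⇑g) ν := (Lp.aestronglyMeasurable g).aemeasurable
  have ham : AEMeasurable a ν := by rw [ha]; fun_prop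
  have hbm : AEMeasurable b ν := by rw [hb, hc]; fun_prop
  have enp : ∀ y : ℝ, ENNReal.ofReal (|y|^p) = (‖y‖₊ : ℝ≥0∞)^p := by
    intro y
    rw [← ENNReal.ofReal_rpow_of_nonneg (abs_nonneg y) hp0.le]
    congr 1
    exact (Real.enorm_eq_ofReal_abs y).symm
  -- Step 1
  have hsum : (∫⁻ x, (a x + b x) ^ r ∂ν) ≤ 1 := by
    have hpt : ∀ x, (a x + b x) ^ r
        ≤ ((‖f x‖₊ : ℝ≥0∞)^p + (‖g x‖₊ : ℝ≥0∞)^p)/2 := by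
      intro x
      have hco : a x + b x
          = ENNReal.ofReal (((f x + g x)/2)^2 + (p-1)*((f x - g x)/2)^2) := by
        simp only [ha, hb, hc]
        rw [← ENNReal.ofReal_mul (by linarith : (0:ℝ) ≤ p - 1),
          ← ENNReal.ofReal_add (sq_nonneg _) (mul_nonneg (by linarith) (sq_nonneg _))]
      rw [hco, ENNReal.ofReal_rpow_of_nonneg
        (by nlinarith [sq_nonneg ((f x + g x)/2), sq_nonneg ((f x - g x)/2)]) hr0.le]
      calc ENNReal.ofReal ((((f x + g x)/2)^2 + (p-1)*((f x - g x)/2)^2) ^ r)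
          ≤ ENNReal.ofReal ((|f x|^p + |g x|^p)/2) :=
            ENNReal.ofReal_le_ofReal (key3 hp hp2 (f x) (g x))
        _ = ((‖f x‖₊ : ℝ≥0∞)^p + (‖g x‖₊ : ℝ≥0∞)^p)/2 := by
            rw [ENNReal.ofReal_div_of_pos two_pos,
              ENNReal.ofReal_add (by positivity) (by positivity), enp, enp]
            norm_num
    calc (∫⁻ x, (a x + b x) ^ r ∂ν)
        ≤ ∫⁻ x, ((‖f x‖₊ : ℝ≥0∞)^p + (‖g x‖₊ : ℝ≥0∞)^p)/2 ∂ν := lintegral_mono hpt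
      _ = 1 := by
          simp_rw [ENNReal.div_eq_inv_mul]
          rw [lintegral_const_mul'' _ (show AEMeasurable
                (fun x => (‖f x‖₊ : ℝ≥0∞) ^ p + (‖g x‖₊ : ℝ≥0∞) ^ p) ν from
              (show AEMeasurable (fun x => (‖f x‖₊ : ℝ≥0∞) ^ p) ν from
                (Lp.aestronglyMeasurable f).enorm.pow_const p).add
              (show AEMeasurable (fun x => (‖g x‖₊ : ℝ≥0∞) ^ p) ν from
                (Lp.aestronglyMeasurable g).enorm.pow_const p)),
            lintegral_add_left' (show AEMeasurable (fun x => (‖f x‖₊ : ℝ≥0∞) ^ p) ν from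
              (Lp.aestronglyMeasurable f).enorm.pow_const p),
            Ieq f, Ieq g, hE1 f hf, hE1 g hg, ENNReal.one_rpow, one_add_one_eq_two,
            ENNReal.inv_mul_cancel (by norm_num) (by norm_num)]
  -- Step 2
  have hu : (⇑((2:ℝ)⁻¹ • (f + g)) : Ω → ℝ) =ᵐ[ν] fun x => (f x + g x)/2 := by
    filter_upwards [Lp.coeFn_smul (2:ℝ)⁻¹ (f+g), Lp.coeFn_add f g] with x h1 h2
    rw [h1, Pi.smul_apply, h2, Pi.add_apply, smul_eq_mul]
    ring
  have hv : (⇑((2:ℝ)⁻¹ • (f - g)) : Ω → ℝ) =ᵐ[ν] fun x => (f x - g x)/2 := by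
    filter_upwards [Lp.coeFn_smul (2:ℝ)⁻¹ (f-g), Lp.coeFn_sub f g] with x h1 h2
    rw [h1, Pi.smul_apply, h2, Pi.sub_apply, smul_eq_mul]
    ring
  have hIa : (∫⁻ x, a x ^ r ∂ν)
      = (eLpNorm (⇑((2:ℝ)⁻¹ • (f + g))) (ENNReal.ofReal p) ν) ^ p := by
    rw [← Ieq ((2:ℝ)⁻¹ • (f + g))]
    apply lintegral_congr_ae
    filter_upwards [hu] with x hx
    simp only [ha]
    rw [ENNReal.ofReal_rpow_of_nonneg (sq_nonneg _) hr0.le, hr,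
      sq_rpow_half hp0, enp, hx]
  have hIb : (∫⁻ x, b x ^ r ∂ν)
      = c ^ r * (eLpNorm (⇑((2:ℝ)⁻¹ • (f - g))) (ENNReal.ofReal p) ν) ^ p := by
    rw [← Ieq ((2:ℝ)⁻¹ • (f - g)),
      ← lintegral_const_mul'' _ (show AEMeasurable (fun x => (‖((2:ℝ)⁻¹ • (f - g)) x‖₊ : ℝ≥0∞) ^ p) ν from
        (Lp.aestronglyMeasurable ((2:ℝ)⁻¹ • (f - g))).enorm.pow_const p)]
    apply lintegral_congr_ae
    filter_upwards [hv] with x hx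
    simp only [hb]
    rw [ENNReal.mul_rpow_of_nonneg _ _ hr0.le,
      ENNReal.ofReal_rpow_of_nonneg (sq_nonneg _) hr0.le]
    congr 1
    rw [hr, sq_rpow_half hp0, enp, hx]
  -- Step 3
  have hrm := revMink ν hr0 hr1 ham hbm
  rw [hIa, hIb] at hrm
  have hone : (∫⁻ x, (a x + b x) ^ r ∂ν) ^ (1/r) ≤ 1 := by
    calc (∫⁻ x, (a x + b x) ^ r ∂ν) ^ (1/r) ≤ (1:ℝ≥0∞) ^ (1/r) :=
          ENNReal.rpow_le_rpow hsum (by positivity)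
      _ = 1 := ENNReal.one_rpow _
  have hEup : ∀ E : ℝ≥0∞, (E ^ p) ^ (1/r) = E ^ (2:ℝ) := by
    intro E
    rw [← ENNReal.rpow_mul]
    congr 1
    rw [hr]
    field_simp
  have hEvp : (c ^ r * (eLpNorm (⇑((2:ℝ)⁻¹ • (f - g))) (ENNReal.ofReal p) ν) ^ p) ^ (1/r)
      = c * (eLpNorm (⇑((2:ℝ)⁻¹ • (f - g))) (ENNReal.ofReal p) ν) ^ (2:ℝ) := by
    rw [ENNReal.mul_rpow_of_nonneg _ _ (by positivity), hEup, ← ENNReal.rpow_mul,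
      mul_one_div_cancel hr0.ne', ENNReal.rpow_one]
  rw [hEup, hEvp] at hrm
  have main : (eLpNorm (⇑((2:ℝ)⁻¹ • (f + g))) (ENNReal.ofReal p) ν) ^ (2:ℝ)
      + c * (eLpNorm (⇑((2:ℝ)⁻¹ • (f - g))) (ENNReal.ofReal p) ν) ^ (2:ℝ) ≤ 1 :=
    le_trans hrm hone
  -- Step 4
  have hEut : eLpNorm (⇑((2:ℝ)⁻¹ • (f + g))) (ENNReal.ofReal p) ν ≠ ⊤ :=
    Lp.eLpNorm_ne_top _
  have hEvt : eLpNorm (⇑((2:ℝ)⁻¹ • (f - g))) (ENNReal.ofReal p) ν ≠ ⊤ :=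
    Lp.eLpNorm_ne_top _
  have hXt : (eLpNorm (⇑((2:ℝ)⁻¹ • (f + g))) (ENNReal.ofReal p) ν) ^ (2:ℝ) ≠ ⊤ :=
    ENNReal.rpow_ne_top_of_nonneg (by norm_num) hEut
  have hYt : c * (eLpNorm (⇑((2:ℝ)⁻¹ • (f - g))) (ENNReal.ofReal p) ν) ^ (2:ℝ) ≠ ⊤ :=
    ENNReal.mul_ne_top ENNReal.ofReal_ne_top
      (ENNReal.rpow_ne_top_of_nonneg (by norm_num) hEvt)
  have htr := ENNReal.toReal_mono ENNReal.one_ne_top main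
  rw [ENNReal.toReal_add hXt hYt, ENNReal.toReal_one, ENNReal.toReal_mul,
    ← ENNReal.toReal_rpow, ← ENNReal.toReal_rpow, ← Lp.norm_def, ← Lp.norm_def,
    hc, ENNReal.toReal_ofReal (by linarith)] at htr
  have h2 : ∀ z : ℝ, z ^ (2:ℝ) = z ^ 2 := by
    intro z
    rw [show (2:ℝ) = ((2:ℕ):ℝ) by norm_num, Real.rpow_natCast]
  rw [h2, h2] at htr
  exact htr


end Aux

/-- For `p ∈ (1,2]`, the space `L^p` is `2`-uniformly convex with constant `(p-1)/8`. -/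
theorem lp_two_uniformly_convex
    {Ω : Type*} [MeasurableSpace Ω] (ν : Measure Ω)
    (p : ℝ) (hp : 1 < p) (hp2 : p ≤ 2) [Fact (1 ≤ ENNReal.ofReal p)] :
    ∀ ε ∈ Set.Icc (0 : ℝ) 2, ∀ f g : Lp ℝ (ENNReal.ofReal p) ν,
      ‖f‖ = 1 → ‖g‖ = 1 → ε ≤ ‖f - g‖ →
      (p - 1) / 8 * ε ^ 2 ≤ 1 - ‖(2 : ℝ)⁻¹ • (f + g)‖ := by
  intro ε hε f g hf hg hεfg
  obtain ⟨hε0, hε2⟩ := hε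
  have hb := bcl hp hp2 f g hf hg
  have hvnorm : ‖(2:ℝ)⁻¹ • (f - g)‖ = ‖f - g‖/2 := by
    rw [norm_smul, Real.norm_eq_abs, abs_of_pos (by norm_num : (0:ℝ) < 2⁻¹)]
    ring
  rw [hvnorm] at hb
  have hNu : 0 ≤ ‖(2:ℝ)⁻¹ • (f + g)‖ := norm_nonneg _
  have hD : ε^2 ≤ ‖f - g‖^2 := by nlinarith [norm_nonneg (f - g)]
  have hD' : (p-1)*ε^2 ≤ (p-1)*‖f - g‖^2 :=
    mul_le_mul_of_nonneg_left hD (by linarith)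
  have hpos : (0:ℝ) < 1 - (p-1)*ε^2/8 + ‖(2:ℝ)⁻¹ • (f + g)‖ := by nlinarith
  nlinarith [hb, hD', hpos, hNu, sq_nonneg (ε*(p-1))]
end
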